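/- arXiv:1405.0736 — 9 statements merged into one kernel-verified Lean document; each statement's English description precedes it below -/
import Mathlib

section
/- Let I=[-1,1], let S : I×I → [0,1] and D̂ : I → [0,1], and let 0 < α ≤ 1. Set K₊ = inf{(1−w)/D̂(w) : w ∈ I, D̂(w) ≠ 0} and K₋ = inf{(1+w)/D̂(w) : w ∈ I, D̂(w) ≠ 0}. If the noise value θ̂ satisfies −(1−α)K₋ ≤ θ̂ ≤ (1−α)K₊, then for all w, ṽ ∈ I the post-interaction follower opinion w** = w + αS(w,ṽ)(ṽ−w) + θ̂ D̂(w) belongs to I. -/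
open Set

/-- bounds preservation for the leader-follower binary
interaction (Proposition 3.2 of the paper). -/
theorem follower_leader_interaction_preserves_bounds
    (S : ℝ → ℝ → ℝ) (Dh : ℝ → ℝ)
    (hS : ∀ w ∈ Icc (-1:ℝ) 1, ∀ v ∈ Icc (-1:ℝ) 1, S w v ∈ Icc (0:ℝ) 1)
    (hDh : ∀ w ∈ Icc (-1:ℝ) 1, Dh w ∈ Icc (0:ℝ) 1)
    (α : ℝ) (hα : 0 < α) (hα' : α ≤ 1)
    (Kp Km : ℝ)
    (hKp : Kp = sInf {x : ℝ | ∃ w ∈ Icc (-1:ℝ) 1, Dh w ≠ 0 ∧ x = (1 - w)/Dh w})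
    (hKm : Km = sInf {x : ℝ | ∃ w ∈ Icc (-1:ℝ) 1, Dh w ≠ 0 ∧ x = (1 + w)/Dh w})
    (θ : ℝ)
    (hθ : -((1 - α)*Km) ≤ θ ∧ θ ≤ (1 - α)*Kp) :
    ∀ w ∈ Icc (-1:ℝ) 1, ∀ v ∈ Icc (-1:ℝ) 1,
      (w + α * S w v * (v - w) + θ * Dh w) ∈ Icc (-1:ℝ) 1 := by
  intro w hw v hv
  obtain ⟨hw1, hw2⟩ := hw
  obtain ⟨hv1, hv2⟩ := hv
  obtain ⟨hS0, hS1⟩ := hS w ⟨hw1, hw2⟩ v ⟨hv1, hv2⟩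
  obtain ⟨hD0, hD1⟩ := hDh w ⟨hw1, hw2⟩
  set s := α * S w v with hs
  have hs0 : 0 ≤ s := mul_nonneg hα.le hS0
  have hsα : s ≤ α := by
    calc s ≤ α * 1 := mul_le_mul_of_nonneg_left hS1 hα.le
    _ = α := mul_one α
  have hα1 : 0 ≤ 1 - α := by linarith
  -- bounds on the deterministic part
  have hdet1 : w + s * (v - w) ≤ w + α * (1 - w) := by nlinarith
  have hdet2 : -(1) + (1 - α) * (-1 - w) ≤ w + s * (v - w) - (α * (-1 - w) + α * (-1 - w)) + α * (-1 - w) * 2 := by nlinarith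
  have hdet2' : w - α * (1 + w) ≤ w + s * (v - w) := by nlinarith
  rcases eq_or_lt_of_le hD0 with hDz | hDpos
  · -- Dh w = 0
    have hz : θ * Dh w = 0 := by rw [← hDz]; ring
    constructor <;> nlinarith [hz, mul_nonneg hα1 (by linarith : (0:ℝ) ≤ 1 - w), mul_nonneg hα1 (by linarith : (0:ℝ) ≤ 1 + w)]
  · -- Dh w > 0
    have hbddp : BddBelow {x : ℝ | ∃ w ∈ Icc (-1:ℝ) 1, Dh w ≠ 0 ∧ x = (1 - w)/Dh w} := by
      refine ⟨0, ?_⟩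
      rintro x ⟨u, hu, hDu, rfl⟩
      have := hDh u hu
      have hDupos : 0 < Dh u := lt_of_le_of_ne this.1 (Ne.symm hDu)
      exact div_nonneg (by linarith [hu.2]) hDupos.le
    have hbddm : BddBelow {x : ℝ | ∃ w ∈ Icc (-1:ℝ) 1, Dh w ≠ 0 ∧ x = (1 + w)/Dh w} := by
      refine ⟨0, ?_⟩
      rintro x ⟨u, hu, hDu, rfl⟩
      have := hDh u hu
      have hDupos : 0 < Dh u := lt_of_le_of_ne this.1 (Ne.symm hDu)
      exact div_nonneg (by linarith [hu.1]) hDupos.le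
    have hmemp : (1 - w)/Dh w ∈ {x : ℝ | ∃ w ∈ Icc (-1:ℝ) 1, Dh w ≠ 0 ∧ x = (1 - w)/Dh w} :=
      ⟨w, ⟨hw1, hw2⟩, ne_of_gt hDpos, rfl⟩
    have hmemm : (1 + w)/Dh w ∈ {x : ℝ | ∃ w ∈ Icc (-1:ℝ) 1, Dh w ≠ 0 ∧ x = (1 + w)/Dh w} :=
      ⟨w, ⟨hw1, hw2⟩, ne_of_gt hDpos, rfl⟩
    have hKple : Kp ≤ (1 - w)/Dh w := hKp ▸ csInf_le hbddp hmemp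
    have hKmle : Km ≤ (1 + w)/Dh w := hKm ▸ csInf_le hbddm hmemm
    have hθup : θ * Dh w ≤ (1 - α) * (1 - w) := by
      calc θ * Dh w ≤ (1 - α) * Kp * Dh w :=
            mul_le_mul_of_nonneg_right hθ.2 hDpos.le
      _ ≤ (1 - α) * ((1 - w)/Dh w) * Dh w := by
            have := mul_le_mul_of_nonneg_left hKple hα1
            nlinarith
      _ = (1 - α) * (1 - w) := by field_simp
    have hθlo : -((1 - α) * (1 + w)) ≤ θ * Dh w := by
      have h1 : -((1 - α) * Km) * Dh w ≤ θ * Dh w :=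
        mul_le_mul_of_nonneg_right hθ.1 hDpos.le
      have h2 : Km * Dh w ≤ (1 + w) := by
        have := mul_le_mul_of_nonneg_right hKmle hDpos.le
        calc Km * Dh w ≤ (1 + w)/Dh w * Dh w := this
        _ = 1 + w := by field_simp
      nlinarith
    constructor
    · have hring : w - α * (1 + w) - (1 - α) * (1 + w) = -1 := by ring
      linarith
    · have hring : w + α * (1 - w) + (1 - α) * (1 - w) = 1 := by ring
      linarith
end

section
/- Consider the noise-free controlled binary interaction of two leaders (θ₁ = θ₂ = 0). Then w̃* − ṽ* = (1 − α(R(w̃,ṽ)+R(ṽ,w̃)))(w̃ − ṽ). In particular, if R takes values in [0,1], r = inf_{w̃,ṽ∈I} R(w̃,ṽ), and 0 < α ≤ 1/2, then |w̃* − ṽ*| ≤ (1 − 2αr)|w̃ − ṽ| ≤ |w̃ − ṽ|, i.e. the interaction is a contraction of the opinion distance. -/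
open Set

/-- in the noise-free controlled leader-leader interaction the
difference of opinions satisfies an explicit identity and, for compromise
functions with values in `[0,1]` and `α ≤ 1/2`, the interaction is a
contraction of the opinion distance. -/
theorem leaders_interaction_contraction
    (R : ℝ → ℝ → ℝ) (α ν β ψ μ wd mF : ℝ)
    (hα : 0 < α) (hν : 0 < ν)
    (hβ : β = 4*α^2/(ν + 4*α^2))
    (hψ : 0 ≤ ψ) (hμ : 0 ≤ μ) (hψμ : ψ + μ = 1)
    (hwd : wd ∈ Icc (-1:ℝ) 1) (hmF : mF ∈ Icc (-1:ℝ) 1)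
    (r : ℝ) :
    ∀ w ∈ Icc (-1:ℝ) 1, ∀ v ∈ Icc (-1:ℝ) 1,
      ((w + α * R w v * (v - w)
          + (-(β/2) * (ψ*((w - wd) + (v - wd)) + μ*((w - mF) + (v - mF)))
             - (α*β/2) * (R w v - R v w) * (v - w)))
        - (v + α * R v w * (w - v)
          + (-(β/2) * (ψ*((w - wd) + (v - wd)) + μ*((w - mF) + (v - mF)))
             - (α*β/2) * (R w v - R v w) * (v - w)))
        = (1 - α * (R w v + R v w)) * (w - v))
      ∧ ((∀ a ∈ Icc (-1:ℝ) 1, ∀ b ∈ Icc (-1:ℝ) 1, R a b ∈ Icc (0:ℝ) 1) →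
          r = sInf {x : ℝ | ∃ a ∈ Icc (-1:ℝ) 1, ∃ b ∈ Icc (-1:ℝ) 1, x = R a b} →
          α ≤ 1/2 →
          |(w + α * R w v * (v - w)
              + (-(β/2) * (ψ*((w - wd) + (v - wd)) + μ*((w - mF) + (v - mF)))
                 - (α*β/2) * (R w v - R v w) * (v - w)))
            - (v + α * R v w * (w - v)
              + (-(β/2) * (ψ*((w - wd) + (v - wd)) + μ*((w - mF) + (v - mF)))
                 - (α*β/2) * (R w v - R v w) * (v - w)))|
            ≤ (1 - 2*α*r) * |w - v|
          ∧ (1 - 2*α*r) * |w - v| ≤ |w - v|) := by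

  intro w hw v hv
  have hiden :
      ((w + α * R w v * (v - w)
          + (-(β/2) * (ψ*((w - wd) + (v - wd)) + μ*((w - mF) + (v - mF)))
             - (α*β/2) * (R w v - R v w) * (v - w)))
        - (v + α * R v w * (w - v)
          + (-(β/2) * (ψ*((w - wd) + (v - wd)) + μ*((w - mF) + (v - mF)))
             - (α*β/2) * (R w v - R v w) * (v - w)))
        = (1 - α * (R w v + R v w)) * (w - v)) := by ring
  refine ⟨hiden, ?_⟩
  intro hR hr hα2
  set S := {x : ℝ | ∃ a ∈ Icc (-1:ℝ) 1, ∃ b ∈ Icc (-1:ℝ) 1, x = R a b}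
  have hbdd : BddBelow S := ⟨0, fun x ⟨a, ha, b, hb, hx⟩ => hx ▸ (hR a ha b hb).1⟩
  have hne : S.Nonempty := ⟨R w v, w, hw, v, hv, rfl⟩
  have hr1 : r ≤ R w v := hr ▸ csInf_le hbdd ⟨w, hw, v, hv, rfl⟩
  have hr2 : r ≤ R v w := hr ▸ csInf_le hbdd ⟨v, hv, w, hw, rfl⟩
  have hr0 : 0 ≤ r := hr ▸ le_csInf hne (fun x ⟨a, ha, b, hb, hx⟩ => hx ▸ (hR a ha b hb).1)
  have hRw := hR w hw v hv
  have hRv := hR v hv w hw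
  have hfac0 : 0 ≤ 1 - α * (R w v + R v w) := by nlinarith [hRw.2, hRv.2]
  have hfacle : 1 - α * (R w v + R v w) ≤ 1 - 2*α*r := by nlinarith
  rw [hiden, abs_mul, abs_of_nonneg hfac0]
  constructor
  · exact mul_le_mul_of_nonneg_right hfacle (abs_nonneg _)
  · nlinarith [abs_nonneg (w - v), mul_nonneg (mul_nonneg hα.le hr0) (abs_nonneg (w-v))]
end

section
/- Fix w̃_k, w̃_h, w_d, m_F ∈ ℝ, a function R : ℝ×ℝ → ℝ, and constants α > 0, ν > 0, ψ, μ ≥ 0 with ψ+μ = 1. For u ∈ ℝ define the post-interaction opinions w̃_k(u) = w̃_k + αR(w̃_k,w̃_h)(w̃_h−w̃_k) + 2αu and w̃_h(u) = w̃_h + αR(w̃_h,w̃_k)(w̃_k−w̃_h) + 2αu, and the cost J(u) = α[ (ψ/2)((w̃_k(u)−w_d)² + (w̃_h(u)−w_d)²) + (μ/2)((w̃_k(u)−m_F)² + (w̃_h(u)−m_F)²) + ν u² ]. Then J has a unique global minimizer u*, it satisfies the implicit feedback relation 2αu* = −(2α²/ν) Σ_{p∈{k,h}} [ψ(w̃_p(u*)−w_d)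 + μ(w̃_p(u*)−m_F)], and it is given explicitly by 2αu* = −(β/2)[ψ(w̃_k+w̃_h−2w_d) + μ(w̃_k+w̃_h−2m_F)] − (αβ/2)(R(w̃_k,w̃_h)−R(w̃_h,w̃_k))(w̃_h−w̃_k), where β = 4α²/(ν+4α²). -/
/-- Post-interaction opinion of the first of two interacting leaders with
opinions `wk`, `wh`, compromise function `R`, strength `α` and control `u`. -/
noncomputable def postOpinion (wk wh α : ℝ) (R : ℝ → ℝ → ℝ) (u : ℝ) : ℝ :=
  wk + α * R wk wh * (wh - wk) + 2*α*u

/-- The binary cost functional of the instantaneous control problem. -/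
noncomputable def binaryCost (wk wh wd mF α ν ψ μ : ℝ) (R : ℝ → ℝ → ℝ) (u : ℝ) : ℝ :=
  α * ((ψ/2) * ((postOpinion wk wh α R u - wd)^2 + (postOpinion wh wk α R u - wd)^2)
     + (μ/2) * ((postOpinion wk wh α R u - mF)^2 + (postOpinion wh wk α R u - mF)^2)
     + ν * u^2)

/-- the binary cost has a unique global minimizer, which satisfies
the implicit feedback relation and is given by the explicit feedback formula. -/
theorem binary_cost_unique_minimizer
    (wk wh wd mF : ℝ) (R : ℝ → ℝ → ℝ) (α ν ψ μ : ℝ)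
    (hα : 0 < α) (hν : 0 < ν) (hψ : 0 ≤ ψ) (hμ : 0 ≤ μ) (hψμ : ψ + μ = 1) :
    ∃ ustar : ℝ,
      (∀ u : ℝ, binaryCost wk wh wd mF α ν ψ μ R ustar ≤ binaryCost wk wh wd mF α ν ψ μ R u)
      ∧ (∀ u' : ℝ,
          (∀ u : ℝ, binaryCost wk wh wd mF α ν ψ μ R u' ≤ binaryCost wk wh wd mF α ν ψ μ R u)
          → u' = ustar)
      ∧ (2*α*ustar
          = -(2*α^2/ν) * ((ψ*(postOpinion wk wh α R ustar - wd)
                            + μ*(postOpinion wk wh α R ustar - mF))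
                          + (ψ*(postOpinion wh wk α R ustar - wd)
                            + μ*(postOpinion wh wk α R ustar - mF))))
      ∧ (2*α*ustar
          = -((4*α^2/(ν + 4*α^2))/2) * (ψ*(wk + wh - 2*wd) + μ*(wk + wh - 2*mF))
            - (α*(4*α^2/(ν + 4*α^2))/2) * (R wk wh - R wh wk) * (wh - wk)) := by
  have hD : 0 < ν + 4*α^2 := by nlinarith
  have hD' : (ν + 4*α^2) ≠ 0 := ne_of_gt hD
  have hν' : ν ≠ 0 := ne_of_gt hν
  set s : ℝ := wk + α * R wk wh * (wh - wk) + wh + α * R wh wk * (wk - wh) with hs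
  set ustar : ℝ := -(α*(ψ*(s-2*wd)+μ*(s-2*mF)))/(ν+4*α^2) with hu
  have hμ' : μ = 1 - ψ := by linarith
  have key : ∀ u : ℝ, binaryCost wk wh wd mF α ν ψ μ R u
      = binaryCost wk wh wd mF α ν ψ μ R ustar + α*(ν+4*α^2)*(u-ustar)^2 := by
    intro u
    simp only [binaryCost, postOpinion, hu, hs, hμ']
    field_simp
    ring
  refine ⟨ustar, ?_, ?_, ?_, ?_⟩
  · intro u
    rw [key u]
    nlinarith [sq_nonneg (u - ustar), mul_pos hα hD]
  · intro u' hmin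
    have h1 := hmin ustar
    rw [key u'] at h1
    have h2 : α*(ν+4*α^2)*(u'-ustar)^2 ≤ 0 := by linarith
    have h3 : (u'-ustar)^2 ≤ 0 := by
      by_contra h
      push_neg at h
      nlinarith [mul_pos hα hD]
    have : u' - ustar = 0 := by nlinarith [sq_nonneg (u'-ustar)]
    linarith
  · simp only [postOpinion, hu, hs, hμ']
    field_simp
    ring
  · simp only [hu, hs, hμ']
    field_simp
    ring
end

section
/- Let f_L : I → [0,∞) be integrable with ∫_I f_L = ρ > 0 and m_L = (1/ρ)∫_I w̃ f_L(w̃) dw̃, and let η_L > 0. For the noise-free controlled binary leader interaction one has (η_L/(2ρ)) ∫_{I²} (w̃* + ṽ* − w̃ − ṽ) f_L(w̃) f_L(ṽ) dw̃ dṽ = η_L α(1−β)(1/ρ) ∫_{I²} (R(w̃,ṽ)−R(ṽ,w̃)) ṽ f_L(w̃) f_L(ṽ) dw̃ dṽ + ρη_L β[ψ(w_d − m_L) + μ(m_F − m_L)]. -/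
open Set MeasureTheory

/-- evolution of the leaders' mean opinion in the Boltzmann
description of the noise-free controlled leader-leader interaction. -/
theorem leaders_mean_opinion_evolution
    (R : ℝ → ℝ → ℝ)
    (hRmeas : Measurable fun p : ℝ × ℝ => R p.1 p.2)
    (hR : ∀ w ∈ Icc (-1:ℝ) 1, ∀ v ∈ Icc (-1:ℝ) 1, R w v ∈ Icc (0:ℝ) 1)
    (α ν β ψ μ wd mF : ℝ)
    (hα : 0 < α) (hν : 0 < ν)
    (hβ : β = 4*α^2/(ν + 4*α^2))
    (hψ : 0 ≤ ψ) (hμ : 0 ≤ μ) (hψμ : ψ + μ = 1)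
    (hwd : wd ∈ Icc (-1:ℝ) 1) (hmF : mF ∈ Icc (-1:ℝ) 1)
    (fL : ℝ → ℝ) (hfLmeas : Measurable fL)
    (hfL0 : ∀ w ∈ Icc (-1:ℝ) 1, 0 ≤ fL w)
    (hfLint : IntegrableOn fL (Icc (-1:ℝ) 1))
    (ρ : ℝ) (hρ : 0 < ρ)
    (hmass : (∫ w in Icc (-1:ℝ) 1, fL w) = ρ)
    (mL : ℝ) (hmL : mL = (1/ρ) * ∫ w in Icc (-1:ℝ) 1, w * fL w)
    (ηL : ℝ) (hηL : 0 < ηL) :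
    (ηL/(2*ρ)) * (∫ w in Icc (-1:ℝ) 1, ∫ v in Icc (-1:ℝ) 1,
        ((w + α * R w v * (v - w)
            + (-(β/2) * (ψ*((w - wd) + (v - wd)) + μ*((w - mF) + (v - mF)))
               - (α*β/2) * (R w v - R v w) * (v - w)))
         + (v + α * R v w * (w - v)
            + (-(β/2) * (ψ*((w - wd) + (v - wd)) + μ*((w - mF) + (v - mF)))
               - (α*β/2) * (R w v - R v w) * (v - w)))
         - w - v) * fL w * fL v)
    = ηL*α*(1 - β)*(1/ρ) * (∫ w in Icc (-1:ℝ) 1, ∫ v in Icc (-1:ℝ) 1,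
        (R w v - R v w) * v * fL w * fL v)
      + ρ*ηL*β*(ψ*(wd - mL) + μ*(mF - mL)) := by
  have hμeq : μ = 1 - ψ := by linarith
  subst hμeq
  have hS : MeasurableSet (Icc (-1:ℝ) 1) := measurableSet_Icc
  set S := Icc (-1:ℝ) 1 with hSdef
  set P : Measure (ℝ × ℝ) := (volume.restrict S).prod (volume.restrict S) with hPdef
  set c : ℝ := 2*(ψ*wd + (1-ψ)*mF) with hcdef
  -- a.e. membership in S × S
  have haeS : ∀ᵐ p ∂P, p.1 ∈ S ∧ p.2 ∈ S := by
    rw [hPdef, Measure.prod_restrict]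
    filter_upwards [ae_restrict_mem (hS.prod hS)] with p hp
    exact ⟨hp.1, hp.2⟩
  have hff : Integrable (fun p : ℝ × ℝ => fL p.1 * fL p.2) P :=
    hfLint.mul_prod hfLint
  have hRswap : Measurable fun p : ℝ × ℝ => R p.2 p.1 := hRmeas.comp measurable_swap
  have hb : ∀ p : ℝ × ℝ, p.1 ∈ S ∧ p.2 ∈ S → |R p.1 p.2 - R p.2 p.1| ≤ 1 := by
    intro p hp
    have h1 := hR p.1 hp.1 p.2 hp.2
    have h2 := hR p.2 hp.2 p.1 hp.1
    rw [abs_le]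
    exact ⟨by linarith [h1.1, h2.2], by linarith [h1.2, h2.1]⟩
  -- integrable pieces
  have hH0 : Integrable (fun p : ℝ × ℝ =>
      ((R p.1 p.2 - R p.2 p.1) * p.2) * (fL p.1 * fL p.2)) P := by
    apply hff.bdd_mul (c := 1) (((hRmeas.sub hRswap).mul measurable_snd).aestronglyMeasurable)
    filter_upwards [haeS] with p hp
    have h1 := hb p hp
    have h2 : |p.2| ≤ 1 := abs_le.2 ⟨hp.2.1, hp.2.2⟩
    calc ‖(R p.1 p.2 - R p.2 p.1) * p.2‖
        = |R p.1 p.2 - R p.2 p.1| * |p.2| := abs_mul _ _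
      _ ≤ 1 * 1 := mul_le_mul h1 h2 (abs_nonneg _) zero_le_one
      _ = 1 := by norm_num
  have hHs0 : Integrable (fun p : ℝ × ℝ =>
      ((R p.1 p.2 - R p.2 p.1) * (-p.1)) * (fL p.1 * fL p.2)) P := by
    apply hff.bdd_mul (c := 1)
      (((hRmeas.sub hRswap).mul measurable_fst.neg).aestronglyMeasurable)
    filter_upwards [haeS] with p hp
    have h1 := hb p hp
    have h2 : |(-p.1)| ≤ 1 := by rw [abs_neg]; exact abs_le.2 ⟨hp.1.1, hp.1.2⟩
    calc ‖(R p.1 p.2 - R p.2 p.1) * (-p.1)‖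
        = |R p.1 p.2 - R p.2 p.1| * |(-p.1)| := abs_mul _ _
      _ ≤ 1 * 1 := mul_le_mul h1 h2 (abs_nonneg _) zero_le_one
      _ = 1 := by norm_num
  have hHadd : Integrable (fun p : ℝ × ℝ =>
      ((R p.1 p.2 - R p.2 p.1) * p.2) * (fL p.1 * fL p.2)
        + ((R p.1 p.2 - R p.2 p.1) * (-p.1)) * (fL p.1 * fL p.2)) P := by
    exact hH0.add hHs0
  have hvfL : Integrable (fun v => v * fL v) (volume.restrict S) := by
    apply hfLint.bdd_mul (c := 1) measurable_id.aestronglyMeasurable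
    filter_upwards [ae_restrict_mem hS] with v hv
    exact abs_le.2 ⟨hv.1, hv.2⟩
  have hA1 : Integrable (fun p : ℝ × ℝ => (p.1 * fL p.1) * fL p.2) P :=
    hvfL.mul_prod hfLint
  have hA2 : Integrable (fun p : ℝ × ℝ => fL p.1 * (p.2 * fL p.2)) P :=
    hfLint.mul_prod hvfL
  have hA3 : Integrable (fun p : ℝ × ℝ => ((-c) * fL p.1) * fL p.2) P :=
    (hfLint.const_mul (-c)).mul_prod hfLint
  have hA12 : Integrable (fun p : ℝ × ℝ =>
      (p.1 * fL p.1) * fL p.2 + fL p.1 * (p.2 * fL p.2)) P := by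
    exact hA1.add hA2
  have hA123 : Integrable (fun p : ℝ × ℝ =>
      ((p.1 * fL p.1) * fL p.2 + fL p.1 * (p.2 * fL p.2)) + ((-c) * fL p.1) * fL p.2) P := by
    exact hA12.add hA3
  have hP1 : Integrable (fun p : ℝ × ℝ =>
      ((R p.1 p.2 - R p.2 p.1) * (p.2 - p.1)) * (fL p.1 * fL p.2)) P :=
    hHadd.congr (Filter.Eventually.of_forall fun p => by ring)
  have hP2 : Integrable (fun p : ℝ × ℝ =>
      (p.1 + p.2 - c) * (fL p.1 * fL p.2)) P :=
    hA123.congr (Filter.Eventually.of_forall fun p => by ring)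
  -- values of elementary integrals
  have hM1 : (∫ w in S, w * fL w) = ρ * mL := by
    rw [hmL]; field_simp
  have hI_A1 : (∫ p, (p.1 * fL p.1) * fL p.2 ∂P) = (ρ * mL) * ρ := by
    have h := integral_prod_mul (μ := volume.restrict S) (ν := volume.restrict S)
      (fun w => w * fL w) fL
    rw [hM1, hmass] at h
    exact h
  have hI_A2 : (∫ p, fL p.1 * (p.2 * fL p.2) ∂P) = ρ * (ρ * mL) := by
    have h := integral_prod_mul (μ := volume.restrict S) (ν := volume.restrict S)
      fL (fun v => v * fL v)
    rw [hM1, hmass] at h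
    exact h
  have hI_A3 : (∫ p, ((-c) * fL p.1) * fL p.2 ∂P) = (-c) * ρ * ρ := by
    have h := integral_prod_mul (μ := volume.restrict S) (ν := volume.restrict S)
      (fun w => (-c) * fL w) fL
    rw [integral_const_mul, hmass] at h
    rw [h]
  have hI_P2 : (∫ p, (p.1 + p.2 - c) * (fL p.1 * fL p.2) ∂P)
      = (ρ * mL) * ρ + ρ * (ρ * mL) + (-c) * ρ * ρ := by
    have h1 : (∫ p, (p.1 + p.2 - c) * (fL p.1 * fL p.2) ∂P)
        = ∫ p : ℝ × ℝ, (((p.1 * fL p.1) * fL p.2 + fL p.1 * (p.2 * fL p.2))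
            + ((-c) * fL p.1) * fL p.2) ∂P :=
      integral_congr_ae (Filter.Eventually.of_forall fun p => by ring)
    rw [h1, integral_add hA12 hA3, integral_add hA1 hA2, hI_A1, hI_A2, hI_A3]
  -- the swap symmetry
  have hswap : (∫ p, ((R p.1 p.2 - R p.2 p.1) * (-p.1)) * (fL p.1 * fL p.2) ∂P)
      = ∫ p, ((R p.1 p.2 - R p.2 p.1) * p.2) * (fL p.1 * fL p.2) ∂P := by
    have h := integral_prod_swap (μ := volume.restrict S) (ν := volume.restrict S)
      (fun p : ℝ × ℝ => ((R p.1 p.2 - R p.2 p.1) * p.2) * (fL p.1 * fL p.2))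
    rw [hPdef, ← h]
    apply integral_congr_ae
    refine Filter.Eventually.of_forall fun p => ?_
    simp only [Prod.snd_swap, Prod.fst_swap]
    ring
  have hI_P1 : (∫ p, ((R p.1 p.2 - R p.2 p.1) * (p.2 - p.1)) * (fL p.1 * fL p.2) ∂P)
      = 2 * ∫ p, ((R p.1 p.2 - R p.2 p.1) * p.2) * (fL p.1 * fL p.2) ∂P := by
    have h1 : (∫ p, ((R p.1 p.2 - R p.2 p.1) * (p.2 - p.1)) * (fL p.1 * fL p.2) ∂P)
        = ∫ p : ℝ × ℝ, (((R p.1 p.2 - R p.2 p.1) * p.2) * (fL p.1 * fL p.2)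
            + ((R p.1 p.2 - R p.2 p.1) * (-p.1)) * (fL p.1 * fL p.2)) ∂P :=
      integral_congr_ae (Filter.Eventually.of_forall fun p => by ring)
    rw [h1, integral_add hH0 hHs0, hswap]
    ring
  -- Fubini for the big integrand
  have hC1 : Integrable (fun p : ℝ × ℝ =>
      (α*(1-β)) * (((R p.1 p.2 - R p.2 p.1) * (p.2 - p.1)) * (fL p.1 * fL p.2))) P :=
    hP1.const_mul _
  have hC2 : Integrable (fun p : ℝ × ℝ =>
      (-β) * ((p.1 + p.2 - c) * (fL p.1 * fL p.2))) P :=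
    hP2.const_mul _
  have hC12 : Integrable (fun p : ℝ × ℝ =>
      (α*(1-β)) * (((R p.1 p.2 - R p.2 p.1) * (p.2 - p.1)) * (fL p.1 * fL p.2))
        + (-β) * ((p.1 + p.2 - c) * (fL p.1 * fL p.2))) P := by
    exact hC1.add hC2
  have hBig : Integrable (Function.uncurry fun w v =>
      ((w + α * R w v * (v - w)
            + (-(β/2) * (ψ*((w - wd) + (v - wd)) + (1-ψ)*((w - mF) + (v - mF)))
               - (α*β/2) * (R w v - R v w) * (v - w)))
         + (v + α * R v w * (w - v)
            + (-(β/2) * (ψ*((w - wd) + (v - wd)) + (1-ψ)*((w - mF) + (v - mF)))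
               - (α*β/2) * (R w v - R v w) * (v - w)))
         - w - v) * fL w * fL v) P := by
    apply hC12.congr
    refine Filter.Eventually.of_forall fun p => ?_
    simp only [Function.uncurry, hcdef]
    ring
  have hRHSint : Integrable (Function.uncurry fun w v =>
      (R w v - R v w) * v * fL w * fL v) P := by
    apply hH0.congr
    exact Filter.Eventually.of_forall fun p => by simp only [Function.uncurry]; ring
  rw [MeasureTheory.integral_integral hBig, MeasureTheory.integral_integral hRHSint]
  have hL1 : (∫ z : ℝ × ℝ, ((z.1 + α * R z.1 z.2 * (z.2 - z.1)
            + (-(β/2) * (ψ*((z.1 - wd) + (z.2 - wd)) + (1-ψ)*((z.1 - mF) + (z.2 - mF)))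
               - (α*β/2) * (R z.1 z.2 - R z.2 z.1) * (z.2 - z.1)))
         + (z.2 + α * R z.2 z.1 * (z.1 - z.2)
            + (-(β/2) * (ψ*((z.1 - wd) + (z.2 - wd)) + (1-ψ)*((z.1 - mF) + (z.2 - mF)))
               - (α*β/2) * (R z.1 z.2 - R z.2 z.1) * (z.2 - z.1)))
         - z.1 - z.2) * fL z.1 * fL z.2 ∂P)
      = (α*(1-β)) * (∫ p, ((R p.1 p.2 - R p.2 p.1) * (p.2 - p.1)) * (fL p.1 * fL p.2) ∂P)
        + (-β) * (∫ p, (p.1 + p.2 - c) * (fL p.1 * fL p.2) ∂P) := by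
    have h1 : (∫ z : ℝ × ℝ, ((z.1 + α * R z.1 z.2 * (z.2 - z.1)
            + (-(β/2) * (ψ*((z.1 - wd) + (z.2 - wd)) + (1-ψ)*((z.1 - mF) + (z.2 - mF)))
               - (α*β/2) * (R z.1 z.2 - R z.2 z.1) * (z.2 - z.1)))
         + (z.2 + α * R z.2 z.1 * (z.1 - z.2)
            + (-(β/2) * (ψ*((z.1 - wd) + (z.2 - wd)) + (1-ψ)*((z.1 - mF) + (z.2 - mF)))
               - (α*β/2) * (R z.1 z.2 - R z.2 z.1) * (z.2 - z.1)))
         - z.1 - z.2) * fL z.1 * fL z.2 ∂P)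
        = ∫ p : ℝ × ℝ, ((α*(1-β)) * (((R p.1 p.2 - R p.2 p.1) * (p.2 - p.1)) * (fL p.1 * fL p.2))
            + (-β) * ((p.1 + p.2 - c) * (fL p.1 * fL p.2))) ∂P := by
      apply integral_congr_ae
      refine Filter.Eventually.of_forall fun p => ?_
      simp only [hcdef]
      ring
    rw [h1, integral_add hC1 hC2, integral_const_mul, integral_const_mul]
  have hL2 : (∫ z : ℝ × ℝ, (R z.1 z.2 - R z.2 z.1) * z.2 * fL z.1 * fL z.2 ∂P)
      = ∫ p, ((R p.1 p.2 - R p.2 p.1) * p.2) * (fL p.1 * fL p.2) ∂P :=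
    integral_congr_ae (Filter.Eventually.of_forall fun p => by ring)
  rw [hL1, hL2, hI_P1, hI_P2]
  have hρ' : ρ ≠ 0 := ne_of_gt hρ
  field_simp [hcdef]
  ring
end

section
/- Let f_F : I → [0,∞) be integrable with ∫_I f_F = 1 and mean m_F = ∫_I w f_F(w) dw, let f_L : I → [0,∞) be integrable with ∫_I f_L = ρ > 0 and mean m_L = (1/ρ)∫_I w̃ f_L(w̃) dw̃, and let η_F, η_{FL} > 0, α > 0. Assume the follower compromise function P is symmetric, P(w,v) = P(v,w), and S ≡ 1. Then for the noise-free follower–follower interaction w* = w + αP(w,v)(v−w), v* = v + αP(v,w)(w−v) and the noise-free leader–follower interaction w** = w + α(ṽ−w), one has (η_F/2) ∫_{I²} (w* + v* − w − v) f_F(w) f_F(v) dw dv + η_{FL} ∫_{I²} (w** − w) f_F(w) f_L(ṽ) dw dṽ = ρ η_{FL} α (m_L − m_F); i.e. the followers' mean opinion evolves according to d m_F/dt = η̃_{FL} α (m_L − m_F) with η̃_{FL} = ρη_{FL}. -/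
open Set MeasureTheory

/-- for a symmetric follower compromise function `P` and `S ≡ 1`,
the followers' mean opinion evolves as `d m_F/dt = ρ η_FL α (m_L - m_F)`. -/
theorem followers_mean_opinion_evolution
    (P : ℝ → ℝ → ℝ)
    (hPsym : ∀ w v : ℝ, P w v = P v w)
    (hP : ∀ w ∈ Icc (-1:ℝ) 1, ∀ v ∈ Icc (-1:ℝ) 1, P w v ∈ Icc (0:ℝ) 1)
    (fF fL : ℝ → ℝ) (hfFmeas : Measurable fF) (hfLmeas : Measurable fL)
    (hfF0 : ∀ w ∈ Icc (-1:ℝ) 1, 0 ≤ fF w)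
    (hfL0 : ∀ w ∈ Icc (-1:ℝ) 1, 0 ≤ fL w)
    (hfFint : IntegrableOn fF (Icc (-1:ℝ) 1))
    (hfLint : IntegrableOn fL (Icc (-1:ℝ) 1))
    (hfFmass : (∫ w in Icc (-1:ℝ) 1, fF w) = 1)
    (ρ : ℝ) (hρ : 0 < ρ)
    (hfLmass : (∫ w in Icc (-1:ℝ) 1, fL w) = ρ)
    (mF mL : ℝ)
    (hmF : mF = ∫ w in Icc (-1:ℝ) 1, w * fF w)
    (hmL : mL = (1/ρ) * ∫ w in Icc (-1:ℝ) 1, w * fL w)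
    (α ηF ηFL : ℝ) (hα : 0 < α) (hηF : 0 < ηF) (hηFL : 0 < ηFL) :
    (ηF/2) * (∫ w in Icc (-1:ℝ) 1, ∫ v in Icc (-1:ℝ) 1,
        ((w + α * P w v * (v - w)) + (v + α * P v w * (w - v)) - w - v)
          * fF w * fF v)
    + ηFL * (∫ w in Icc (-1:ℝ) 1, ∫ v in Icc (-1:ℝ) 1,
        ((w + α * (v - w)) - w) * fF w * fL v)
    = ρ * ηFL * α * (mL - mF) := by
  have h0 : ∀ w v : ℝ,
      ((w + α * P w v * (v - w)) + (v + α * P v w * (w - v)) - w - v)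
        * fF w * fF v = 0 := by
    intro w v; rw [hPsym w v]; ring
  have hfLv : IntegrableOn (fun v => v * fL v) (Icc (-1:ℝ) 1) := by
    apply Integrable.bdd_mul (c := 1) hfLint measurable_id.aestronglyMeasurable
    filter_upwards [ae_restrict_mem measurableSet_Icc] with x hx
    rw [Real.norm_eq_abs, abs_le]; exact hx
  have hL1 : (∫ v in Icc (-1:ℝ) 1, v * fL v) = ρ * mL := by
    rw [hmL]; field_simp
  have hinner : ∀ w : ℝ,
      (∫ v in Icc (-1:ℝ) 1, ((w + α * (v - w)) - w) * fF w * fL v)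
        = (α * (ρ * mL)) * fF w - (α * ρ) * (w * fF w) := by
    intro w
    have he : ∀ v : ℝ, ((w + α * (v - w)) - w) * fF w * fL v
        = (α * fF w) * (v * fL v) - (α * (w * fF w)) * fL v := fun v => by ring
    simp only [he]
    rw [integral_sub (hfLv.const_mul _) (hfLint.const_mul _),
      MeasureTheory.integral_const_mul, MeasureTheory.integral_const_mul, hL1, hfLmass]
    ring
  have hfFw : IntegrableOn (fun w => w * fF w) (Icc (-1:ℝ) 1) := by
    apply Integrable.bdd_mul (c := 1) hfFint measurable_id.aestronglyMeasurable
    filter_upwards [ae_restrict_mem measurableSet_Icc] with x hx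
    rw [Real.norm_eq_abs, abs_le]; exact hx
  have houter : (∫ w in Icc (-1:ℝ) 1, ∫ v in Icc (-1:ℝ) 1,
      ((w + α * (v - w)) - w) * fF w * fL v)
      = α * ρ * mL - α * ρ * mF := by
    simp only [hinner]
    rw [integral_sub (hfFint.const_mul _) (hfFw.const_mul _),
      MeasureTheory.integral_const_mul, MeasureTheory.integral_const_mul, hfFmass, ← hmF]
    ring
  simp only [h0, integral_zero, mul_zero, zero_add, houter]
  ring
end

section
/- Let a, b > 0, 0 < ψ ≤ 1, μ = 1−ψ and w_d ∈ ℝ. Then every differentiable pair (m_L, m_F) : [0,∞) → ℝ² solving d m_L/dt = bψ(w_d − m_L) + bμ(m_F − m_L), d m_F/dt = a(m_L − m_F) satisfies m_L(t) → w_d and m_F(t) → w_d as t → ∞; i.e. the mean opinions of leaders and followers both converge to the desired opinion w_d. -/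
open Set Filter

lemma solve_exp_ode (c : ℝ) (f : ℝ → ℝ)
    (hf : ∀ t ∈ Ici (0:ℝ), HasDerivWithinAt f (c * f t) (Ici 0) t) :
    ∀ t ∈ Ici (0:ℝ), f t = f 0 * Real.exp (c * t) := by
  intro T hT
  set h : ℝ → ℝ := fun t => f t * Real.exp (-c * t) with hhdef
  have hD : ∀ t ∈ Ici (0:ℝ), HasDerivWithinAt h 0 (Ici 0) t := by
    intro t ht
    have he : HasDerivAt (fun s => Real.exp (-c * s)) (-c * Real.exp (-c * t)) t := by
      have := ((hasDerivAt_id t).const_mul (-c)).exp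
      simpa [mul_comm] using this
    have := (hf t ht).mul he.hasDerivWithinAt
    refine this.congr_deriv (Eq.symm ?_)
    ring
  have hcont : ContinuousOn h (Icc 0 T) := fun t ht =>
    ((hD t (Icc_subset_Ici_self ht)).continuousWithinAt).mono (Icc_subset_Ici_self)
  have := constant_of_has_deriv_right_zero hcont (fun x hx =>
    (hD x hx.1).mono (Ici_subset_Ici.2 hx.1)) T ⟨hT, le_refl T⟩
  have h0 : h 0 = f 0 := by simp [hhdef]
  have hTeq : f T * Real.exp (-c * T) = f 0 := by rw [← h0]; exact this
  have := congrArg (fun x => x * Real.exp (c * T)) hTeq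
  simpa [mul_assoc, ← Real.exp_add] using this

lemma exp_lin_tendsto (l : ℝ) (hl : l < 0) :
    Tendsto (fun t : ℝ => Real.exp (l * t)) atTop (nhds 0) := by
  rw [Real.tendsto_exp_comp_nhds_zero]
  exact (tendsto_const_mul_atBot_of_neg hl).2 tendsto_id

lemma texp_lin_tendsto (l : ℝ) (hl : l < 0) :
    Tendsto (fun t : ℝ => t * Real.exp (l * t)) atTop (nhds 0) := by
  have h1 : Tendsto (fun t : ℝ => -l * t) atTop atTop :=
    tendsto_id.const_mul_atTop (by linarith)
  have h2 := (Real.tendsto_pow_mul_exp_neg_atTop_nhds_zero 1).comp h1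
  have h3 := h2.const_mul (-(1/l))
  rw [mul_zero] at h3
  refine h3.congr fun t => ?_
  simp only [Function.comp_apply, pow_one]
  have : -(-l * t) = l * t := by ring
  rw [this]
  have hne : l ≠ 0 := hl.ne
  field_simp

/-- every solution of the closed system for the mean opinions
converges to the desired opinion `w_d` as `t → ∞`. -/
theorem mean_opinions_converge_to_desired
    (a b ψ μ wd : ℝ) (ha : 0 < a) (hb : 0 < b)
    (hψ0 : 0 < ψ) (hψ1 : ψ ≤ 1) (hμ : μ = 1 - ψ)
    (mL mF : ℝ → ℝ)
    (hmL : ∀ t ∈ Ici (0:ℝ),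
        HasDerivWithinAt mL (b*ψ*(wd - mL t) + b*μ*(mF t - mL t)) (Ici 0) t)
    (hmF : ∀ t ∈ Ici (0:ℝ),
        HasDerivWithinAt mF (a*(mL t - mF t)) (Ici 0) t) :
    Tendsto mL atTop (nhds wd) ∧ Tendsto mF atTop (nhds wd) := by
  subst hμ
  -- shifted variables
  set u : ℝ → ℝ := fun t => mL t - wd with hudef
  set v : ℝ → ℝ := fun t => mF t - wd with hvdef
  have hu : ∀ t ∈ Ici (0:ℝ),
      HasDerivWithinAt u (-b * u t + b*(1-ψ) * v t) (Ici 0) t := by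
    intro t ht
    have := (hmL t ht).sub_const wd
    refine this.congr_deriv (Eq.symm ?_)
    simp only [hudef, hvdef]
    ring
  have hv : ∀ t ∈ Ici (0:ℝ),
      HasDerivWithinAt v (a * u t - a * v t) (Ici 0) t := by
    intro t ht
    have := (hmF t ht).sub_const wd
    refine this.congr_deriv (Eq.symm ?_)
    simp only [hudef, hvdef]
    ring
  -- discriminant and eigenvalues
  have hdisc : 0 ≤ (a+b)^2 - 4*a*b*ψ := by nlinarith [sq_nonneg (a-b), mul_pos ha hb]
  set D : ℝ := Real.sqrt ((a+b)^2 - 4*a*b*ψ) with hDdef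
  have hD0 : 0 ≤ D := Real.sqrt_nonneg _
  have hDsq : D^2 = (a+b)^2 - 4*a*b*ψ := Real.sq_sqrt hdisc
  have hDlt : D < a + b := by nlinarith [mul_pos (mul_pos ha hb) hψ0]
  set l1 : ℝ := (-(a+b)+D)/2 with hl1def
  set l2 : ℝ := (-(a+b)-D)/2 with hl2def
  have hl1 : l1 < 0 := by rw [hl1def]; linarith
  have hl2 : l2 < 0 := by rw [hl2def]; linarith
  have hl12 : l1 - l2 = D := by rw [hl1def, hl2def]; ring
  set c : ℝ := ((b-a)+D)/(2*a) with hcdef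
  have hc1 : a*c - b = l1 := by
    rw [hcdef, hl1def]; field_simp; ring
  have hc2 : a*c^2 + (a-b)*c - b*(1-ψ) = 0 := by
    rw [hcdef]
    have hane : a ≠ 0 := ha.ne'
    field_simp
    nlinarith [hDsq]
  -- the decoupled combination z = u + c v
  set z : ℝ → ℝ := fun t => u t + c * v t with hzdef
  have hz : ∀ t ∈ Ici (0:ℝ), HasDerivWithinAt z (l1 * z t) (Ici 0) t := by
    intro t ht
    have := (hu t ht).add ((hv t ht).const_mul c)
    refine this.congr_deriv (Eq.symm ?_)
    simp only [hzdef]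
    linear_combination (-(u t)) * hc1 + (v t) * hc2 - (v t * c) * hc1
  have hzexp := solve_exp_ode l1 z hz
  -- v satisfies a driven scalar ODE
  have hv2 : ∀ t ∈ Ici (0:ℝ),
      HasDerivWithinAt v (l2 * v t + a * z 0 * Real.exp (l1 * t)) (Ici 0) t := by
    intro t ht
    have := hv t ht
    convert this using 1
    have hzt := hzexp t ht
    have hzrfl : z t = u t + c * v t := rfl
    have hsum : l1 + l2 = -(a+b) := by rw [hl1def, hl2def]; ring
    linear_combination (-a) * hzt + a * hzrfl + (v t) * hc1 + (v t) * hsum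
  -- tendsto of z
  have hzten : Tendsto z atTop (nhds 0) := by
    have h1 := (exp_lin_tendsto l1 hl1).const_mul (z 0)
    rw [mul_zero] at h1
    refine h1.congr' ?_
    filter_upwards [eventually_ge_atTop (0:ℝ)] with t ht
    exact (hzexp t ht).symm
  -- main case split on D
  have hvten : Tendsto v atTop (nhds 0) := by
    rcases eq_or_ne D 0 with hDz | hDz
    · -- repeated eigenvalue: l1 = l2
      have hll : l1 = l2 := by rw [hl1def, hl2def, hDz]; ring
      set E : ℝ → ℝ := fun t => a * z 0 * t * Real.exp (l1 * t) with hEdef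
      have hE : ∀ t : ℝ, HasDerivAt E (l2 * E t + a * z 0 * Real.exp (l1 * t)) t := by
        intro t
        have he : HasDerivAt (fun s => Real.exp (l1 * s)) (l1 * Real.exp (l1 * t)) t := by
          have := ((hasDerivAt_id t).const_mul l1).exp
          simpa [mul_comm] using this
        have hid : HasDerivAt (fun s : ℝ => a * z 0 * s) (a * z 0) t := by
          simpa using (hasDerivAt_id t).const_mul (a * z 0)
        have := hid.mul he
        refine this.congr_deriv (Eq.symm ?_)
        simp only [hEdef, ← hll]
        ring
      set d : ℝ → ℝ := fun t => v t - E t with hddef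
      have hd : ∀ t ∈ Ici (0:ℝ), HasDerivWithinAt d (l2 * d t) (Ici 0) t := by
        intro t ht
        have := (hv2 t ht).sub (hE t).hasDerivWithinAt
        refine this.congr_deriv (Eq.symm ?_)
        simp only [hddef]
        ring
      have hdexp := solve_exp_ode l2 d hd
      have h1 := (exp_lin_tendsto l2 hl2).const_mul (d 0)
      have h2 := (texp_lin_tendsto l1 hl1).const_mul (a * z 0)
      rw [mul_zero] at h1 h2
      have h3 := h1.add h2
      rw [add_zero] at h3
      refine h3.congr' ?_
      filter_upwards [eventually_ge_atTop (0:ℝ)] with t ht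
      have := hdexp t ht
      simp only [hddef, hEdef] at this ⊢
      linarith [this]
    · -- distinct eigenvalues
      set E : ℝ → ℝ := fun t => (a * z 0 / D) * Real.exp (l1 * t) with hEdef
      have hE : ∀ t : ℝ, HasDerivAt E (l2 * E t + a * z 0 * Real.exp (l1 * t)) t := by
        intro t
        have he : HasDerivAt (fun s => Real.exp (l1 * s)) (l1 * Real.exp (l1 * t)) t := by
          have := ((hasDerivAt_id t).const_mul l1).exp
          simpa [mul_comm] using this
        have := he.const_mul (a * z 0 / D)
        refine this.congr_deriv (Eq.symm ?_)
        simp only [hEdef]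
        field_simp
        linear_combination (a * z 0 * Real.exp (l1*t)) * hl12
      set d : ℝ → ℝ := fun t => v t - E t with hddef
      have hd : ∀ t ∈ Ici (0:ℝ), HasDerivWithinAt d (l2 * d t) (Ici 0) t := by
        intro t ht
        have := (hv2 t ht).sub (hE t).hasDerivWithinAt
        refine this.congr_deriv (Eq.symm ?_)
        simp only [hddef]
        ring
      have hdexp := solve_exp_ode l2 d hd
      have h1 := (exp_lin_tendsto l2 hl2).const_mul (d 0)
      have h2 := (exp_lin_tendsto l1 hl1).const_mul (a * z 0 / D)
      rw [mul_zero] at h1 h2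
      have h3 := h1.add h2
      rw [add_zero] at h3
      refine h3.congr' ?_
      filter_upwards [eventually_ge_atTop (0:ℝ)] with t ht
      have := hdexp t ht
      simp only [hddef, hEdef] at this ⊢
      linarith [this]
  -- conclude
  have huten : Tendsto u atTop (nhds 0) := by
    have := hzten.sub (hvten.const_mul c)
    rw [mul_zero, sub_zero] at this
    refine this.congr fun t => ?_
    simp only [hzdef]
    ring
  constructor
  · have := huten.add_const wd
    rw [zero_add] at this
    exact this.congr fun t => by simp [hudef]
  · have := hvten.add_const wd
    rw [zero_add] at this
    exact this.congr fun t => by simp [hvdef]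
end

section
/- Let f_F be a probability density on I with mean m_F and second moment E_F = ∫_I w² f_F(w) dw, and f_L a density on I with mass ρ > 0, mean m_L and second moment E_L = (1/ρ)∫_I w̃² f_L(w̃) dw̃. Take P ≡ S ≡ 1, interaction strength α > 0, rates η_F, η_{FL} > 0, diffusion weights D, D̂ : I → [0,1], and independent zero-mean noises θ₁, θ₂ of variance σ² and θ̂ of variance σ̂². Then (η_F/2)∫_{I²} E[(w*)²+(v*)²−w²−v²] f_F(w) f_F(v) dw dv + η_{FL}∫_{I²} E[(w**)²−w²] f_F(w) f_L(ṽ) dw dṽ = 2η_F α(α−1)(E_F − m_F²) + ρη_{FL} α²(E_L + E_F − 2 m_L m_F) + 2αρη_{FL}(m_F m_L − E_F) + η_F σ² ∫_I D²(w) f_F(w) dw + ρη_{FL} σ̂² ∫_I D̂²(w) f_F(w) dw. -/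
open Set MeasureTheory ProbabilityTheory

section Aux

variable {Ω : Type*} [MeasureSpace Ω] [IsProbabilityMeasure (volume : Measure Ω)]

lemma integrable_sq_noise (θ : Ω → ℝ) (hint : Integrable θ)
    (hsq : Integrable fun ω => (θ ω)^2) (a b : ℝ) :
    Integrable (fun ω => (a + θ ω * b)^2) := by
  have h : (fun ω => (a + θ ω * b)^2)
      = fun ω => a^2 + ((2*a*b) * θ ω + (b^2) * (θ ω)^2) := by
    funext ω; ring
  rw [h]
  exact (integrable_const _).add ((hint.const_mul _).add (hsq.const_mul _))

lemma integral_sq_noise (θ : Ω → ℝ) (hint : Integrable θ)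
    (hsq : Integrable fun ω => (θ ω)^2) (a b : ℝ) :
    (∫ ω, (a + θ ω * b)^2) = a^2 + 2*a*b*(∫ ω, θ ω) + b^2 * (∫ ω, (θ ω)^2) := by
  have h : (fun ω => (a + θ ω * b)^2)
      = fun ω => a^2 + ((2*a*b) * θ ω + (b^2) * (θ ω)^2) := by
    funext ω; ring
  have i1 : Integrable (fun ω => (2*a*b) * θ ω) := hint.const_mul _
  have i2 : Integrable (fun ω => (b^2) * (θ ω)^2) := hsq.const_mul _
  have i12 : Integrable (fun ω => (2*a*b) * θ ω + (b^2) * (θ ω)^2) := i1.add i2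
  rw [h, integral_add (integrable_const _) i12, integral_add i1 i2,
    integral_const_mul, integral_const_mul]
  simp
  ring

lemma lin_integral (f G : ℝ → ℝ)
    (h0 : IntegrableOn f (Icc (-1:ℝ) 1))
    (h1 : IntegrableOn (fun v => v * f v) (Icc (-1:ℝ) 1))
    (h2 : IntegrableOn (fun v => v^2 * f v) (Icc (-1:ℝ) 1))
    (h3 : IntegrableOn (fun v => (G v)^2 * f v) (Icc (-1:ℝ) 1))
    (c0 c1 c2 c3 : ℝ) :
    (∫ v in Icc (-1:ℝ) 1, (c0 + c1*v + c2*v^2 + c3*(G v)^2) * f v)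
      = c0 * (∫ v in Icc (-1:ℝ) 1, f v) + c1 * (∫ v in Icc (-1:ℝ) 1, v * f v)
        + c2 * (∫ v in Icc (-1:ℝ) 1, v^2 * f v)
        + c3 * (∫ v in Icc (-1:ℝ) 1, (G v)^2 * f v) := by
  have h : (fun v => (c0 + c1*v + c2*v^2 + c3*(G v)^2) * f v)
      = fun v => c0 * f v + (c1 * (v * f v) + (c2 * (v^2 * f v) + c3 * ((G v)^2 * f v))) := by
    funext v; ring
  have i0 : IntegrableOn (fun v => c0 * f v) (Icc (-1:ℝ) 1) := h0.const_mul _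
  have i1 : IntegrableOn (fun v => c1 * (v * f v)) (Icc (-1:ℝ) 1) := h1.const_mul _
  have i2 : IntegrableOn (fun v => c2 * (v^2 * f v)) (Icc (-1:ℝ) 1) := h2.const_mul _
  have i3 : IntegrableOn (fun v => c3 * ((G v)^2 * f v)) (Icc (-1:ℝ) 1) := h3.const_mul _
  have i23 : IntegrableOn (fun v => c2 * (v^2 * f v) + c3 * ((G v)^2 * f v)) (Icc (-1:ℝ) 1) := i2.add i3
  have i123 : IntegrableOn (fun v => c1 * (v * f v) + (c2 * (v^2 * f v) + c3 * ((G v)^2 * f v))) (Icc (-1:ℝ) 1) := i1.add i23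
  rw [h, integral_add i0 i123, integral_add i1 i23, integral_add i2 i3,
    integral_const_mul, integral_const_mul, integral_const_mul, integral_const_mul]
  ring

lemma bdd_mul_integrable (f g : ℝ → ℝ) (hf : IntegrableOn f (Icc (-1:ℝ) 1))
    (hmeas : AEStronglyMeasurable (fun w => g w * f w) (volume.restrict (Icc (-1:ℝ) 1)))
    (hbd : ∀ w ∈ Icc (-1:ℝ) 1, |g w| ≤ 1) :
    IntegrableOn (fun w => g w * f w) (Icc (-1:ℝ) 1) := by
  apply Integrable.mono' hf.abs hmeas
  filter_upwards [ae_restrict_mem measurableSet_Icc] with w hw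
  have := hbd w hw
  calc ‖g w * f w‖ = |g w| * |f w| := by rw [norm_mul]; rfl
    _ ≤ 1 * |f w| := by
        apply mul_le_mul_of_nonneg_right this (abs_nonneg _)
    _ = |f w| := one_mul _

end Aux

/-- evolution of the followers' second moment in the Boltzmann
description with `P ≡ S ≡ 1` and diffusion. -/
theorem followers_second_moment_evolution
    (fF fL : ℝ → ℝ) (hfFmeas : Measurable fF) (hfLmeas : Measurable fL)
    (hfF0 : ∀ w ∈ Icc (-1:ℝ) 1, 0 ≤ fF w)
    (hfL0 : ∀ w ∈ Icc (-1:ℝ) 1, 0 ≤ fL w)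
    (hfFint : IntegrableOn fF (Icc (-1:ℝ) 1))
    (hfLint : IntegrableOn fL (Icc (-1:ℝ) 1))
    (hfFmass : (∫ w in Icc (-1:ℝ) 1, fF w) = 1)
    (ρ : ℝ) (hρ : 0 < ρ)
    (hfLmass : (∫ w in Icc (-1:ℝ) 1, fL w) = ρ)
    (mF mL EF EL : ℝ)
    (hmF : mF = ∫ w in Icc (-1:ℝ) 1, w * fF w)
    (hEF : EF = ∫ w in Icc (-1:ℝ) 1, w^2 * fF w)
    (hmL : mL = (1/ρ) * ∫ w in Icc (-1:ℝ) 1, w * fL w)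
    (hEL : EL = (1/ρ) * ∫ w in Icc (-1:ℝ) 1, w^2 * fL w)
    (α ηF ηFL σ σh : ℝ) (hα : 0 < α) (hηF : 0 < ηF) (hηFL : 0 < ηFL)
    (D Dh : ℝ → ℝ) (hDmeas : Measurable D) (hDhmeas : Measurable Dh)
    (hD : ∀ w ∈ Icc (-1:ℝ) 1, D w ∈ Icc (0:ℝ) 1)
    (hDh : ∀ w ∈ Icc (-1:ℝ) 1, Dh w ∈ Icc (0:ℝ) 1)
    (Ω : Type*) [MeasureSpace Ω] [IsProbabilityMeasure (volume : Measure Ω)]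
    (θ₁ θ₂ θh : Ω → ℝ)
    (hθ₁meas : Measurable θ₁) (hθ₂meas : Measurable θ₂) (hθhmeas : Measurable θh)
    (hindep₁₂ : IndepFun θ₁ θ₂) (hindep₁h : IndepFun θ₁ θh) (hindep₂h : IndepFun θ₂ θh)
    (hθ₁int : Integrable θ₁) (hθ₂int : Integrable θ₂) (hθhint : Integrable θh)
    (hθ₁sq : Integrable fun ω => (θ₁ ω)^2)
    (hθ₂sq : Integrable fun ω => (θ₂ ω)^2)
    (hθhsq : Integrable fun ω => (θh ω)^2)
    (hθ₁mean : (∫ ω, θ₁ ω) = 0) (hθ₂mean : (∫ ω, θ₂ ω) = 0)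
    (hθhmean : (∫ ω, θh ω) = 0)
    (hθ₁var : (∫ ω, (θ₁ ω)^2) = σ^2) (hθ₂var : (∫ ω, (θ₂ ω)^2) = σ^2)
    (hθhvar : (∫ ω, (θh ω)^2) = σh^2) :
    (ηF/2) * (∫ w in Icc (-1:ℝ) 1, ∫ v in Icc (-1:ℝ) 1,
        (∫ ω, ((w + α*(v - w) + θ₁ ω * D w)^2
               + (v + α*(w - v) + θ₂ ω * D v)^2 - w^2 - v^2))
          * fF w * fF v)
    + ηFL * (∫ w in Icc (-1:ℝ) 1, ∫ v in Icc (-1:ℝ) 1,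
        (∫ ω, ((w + α*(v - w) + θh ω * Dh w)^2 - w^2)) * fF w * fL v)
    = 2*ηF*α*(α - 1)*(EF - mF^2)
      + ρ*ηFL*α^2*(EL + EF - 2*mL*mF)
      + 2*α*ρ*ηFL*(mF*mL - EF)
      + ηF*σ^2*(∫ w in Icc (-1:ℝ) 1, (D w)^2 * fF w)
      + ρ*ηFL*σh^2*(∫ w in Icc (-1:ℝ) 1, (Dh w)^2 * fF w) := by
  have habs_id : ∀ w ∈ Icc (-1:ℝ) 1, |w| ≤ 1 := fun w hw => abs_le.mpr ⟨hw.1, hw.2⟩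
  have habs_sq : ∀ w ∈ Icc (-1:ℝ) 1, |w^2| ≤ 1 := by
    intro w hw; rw [abs_pow, sq_abs]
    nlinarith [habs_id w hw, abs_nonneg w, sq_abs w, hw.1, hw.2]
  have habs_D : ∀ w ∈ Icc (-1:ℝ) 1, |(D w)^2| ≤ 1 := by
    intro w hw; have := hD w hw; rw [abs_pow, sq_abs]
    nlinarith [this.1, this.2]
  have habs_Dh : ∀ w ∈ Icc (-1:ℝ) 1, |(Dh w)^2| ≤ 1 := by
    intro w hw; have := hDh w hw; rw [abs_pow, sq_abs]
    nlinarith [this.1, this.2]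
  have intWF : IntegrableOn (fun w => w * fF w) (Icc (-1:ℝ) 1) :=
    bdd_mul_integrable fF id hfFint
      ((measurable_id.mul hfFmeas).aestronglyMeasurable) habs_id
  have intW2F : IntegrableOn (fun w => w^2 * fF w) (Icc (-1:ℝ) 1) :=
    bdd_mul_integrable fF (fun w => w^2) hfFint
      (((measurable_id.pow_const 2).mul hfFmeas).aestronglyMeasurable) habs_sq
  have intD2F : IntegrableOn (fun w => (D w)^2 * fF w) (Icc (-1:ℝ) 1) :=
    bdd_mul_integrable fF (fun w => (D w)^2) hfFint
      (((hDmeas.pow_const 2).mul hfFmeas).aestronglyMeasurable) habs_D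
  have intDh2F : IntegrableOn (fun w => (Dh w)^2 * fF w) (Icc (-1:ℝ) 1) :=
    bdd_mul_integrable fF (fun w => (Dh w)^2) hfFint
      (((hDhmeas.pow_const 2).mul hfFmeas).aestronglyMeasurable) habs_Dh
  have intWL : IntegrableOn (fun w => w * fL w) (Icc (-1:ℝ) 1) :=
    bdd_mul_integrable fL id hfLint
      ((measurable_id.mul hfLmeas).aestronglyMeasurable) habs_id
  have intW2L : IntegrableOn (fun w => w^2 * fL w) (Icc (-1:ℝ) 1) :=
    bdd_mul_integrable fL (fun w => w^2) hfLint
      (((measurable_id.pow_const 2).mul hfLmeas).aestronglyMeasurable) habs_sq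
  have intDh2L : IntegrableOn (fun w => (Dh w)^2 * fL w) (Icc (-1:ℝ) 1) :=
    bdd_mul_integrable fL (fun w => (Dh w)^2) hfLint
      (((hDhmeas.pow_const 2).mul hfLmeas).aestronglyMeasurable) habs_Dh
  have hWL : (∫ w in Icc (-1:ℝ) 1, w * fL w) = ρ * mL := by
    rw [hmL]; field_simp
  have hW2L : (∫ w in Icc (-1:ℝ) 1, w^2 * fL w) = ρ * EL := by
    rw [hEL]; field_simp
  set JD := (∫ w in Icc (-1:ℝ) 1, (D w)^2 * fF w) with hJD
  set JDh := (∫ w in Icc (-1:ℝ) 1, (Dh w)^2 * fF w) with hJDh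
  -- pointwise ω-integrals
  have hω1 : ∀ w v : ℝ,
      (∫ ω, ((w + α*(v - w) + θ₁ ω * D w)^2
             + (v + α*(w - v) + θ₂ ω * D v)^2 - w^2 - v^2))
      = (2*α*(α-1)*w^2 + σ^2*(D w)^2) + (-(4*α*(α-1)*w))*v
          + (2*α*(α-1))*v^2 + σ^2*(D v)^2 := by
    intro w v
    have h : (fun ω => (w + α*(v - w) + θ₁ ω * D w)^2
        + (v + α*(w - v) + θ₂ ω * D v)^2 - w^2 - v^2)
        = fun ω => ((w + α*(v - w)) + θ₁ ω * (D w))^2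
            + (((v + α*(w - v)) + θ₂ ω * (D v))^2 + (-(w^2) - v^2)) := by
      funext ω; ring
    have i2c : Integrable (fun ω => ((v + α*(w - v)) + θ₂ ω * (D v))^2 + (-(w^2) - v^2)) :=
      (integrable_sq_noise θ₂ hθ₂int hθ₂sq _ _).add (integrable_const _)
    rw [h, integral_add (integrable_sq_noise θ₁ hθ₁int hθ₁sq _ _) i2c,
      integral_add (integrable_sq_noise θ₂ hθ₂int hθ₂sq _ _) (integrable_const _),
      integral_sq_noise θ₁ hθ₁int hθ₁sq, integral_sq_noise θ₂ hθ₂int hθ₂sq,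
      hθ₁mean, hθ₂mean, hθ₁var, hθ₂var, integral_const]
    simp
    ring
  have hω2 : ∀ w v : ℝ,
      (∫ ω, ((w + α*(v - w) + θh ω * Dh w)^2 - w^2))
      = ((α^2 - 2*α)*w^2 + σh^2*(Dh w)^2) + ((2*α - 2*α^2)*w)*v + α^2*v^2 + 0*(Dh v)^2 := by
    intro w v
    have h : (fun ω => (w + α*(v - w) + θh ω * Dh w)^2 - w^2)
        = fun ω => ((w + α*(v - w)) + θh ω * (Dh w))^2 + (-(w^2)) := by
      funext ω; ring
    rw [h, integral_add (integrable_sq_noise θh hθhint hθhsq _ _) (integrable_const _),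
      integral_sq_noise θh hθhint hθhsq, hθhmean, hθhvar, integral_const]
    simp
    ring
  -- inner v-integrals
  have hinner1 : ∀ w : ℝ,
      (∫ v in Icc (-1:ℝ) 1,
        ((2*α*(α-1)*w^2 + σ^2*(D w)^2) + (-(4*α*(α-1)*w))*v
          + (2*α*(α-1))*v^2 + σ^2*(D v)^2) * fF w * fF v)
      = ((2*α*(α-1)*EF + σ^2*JD) + (-(4*α*(α-1)*mF))*w
          + (2*α*(α-1))*w^2 + σ^2*(D w)^2) * fF w := by
    intro w
    have h : (fun v => ((2*α*(α-1)*w^2 + σ^2*(D w)^2) + (-(4*α*(α-1)*w))*v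
          + (2*α*(α-1))*v^2 + σ^2*(D v)^2) * fF w * fF v)
        = fun v => fF w * (((2*α*(α-1)*w^2 + σ^2*(D w)^2) + (-(4*α*(α-1)*w))*v
          + (2*α*(α-1))*v^2 + σ^2*(D v)^2) * fF v) := by
      funext v; ring
    rw [h, integral_const_mul, lin_integral fF D hfFint intWF intW2F intD2F,
      hfFmass, ← hmF, ← hEF, ← hJD]
    ring
  have hinner2 : ∀ w : ℝ,
      (∫ v in Icc (-1:ℝ) 1,
        (((α^2 - 2*α)*w^2 + σh^2*(Dh w)^2) + ((2*α - 2*α^2)*w)*v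
          + α^2*v^2 + 0*(Dh v)^2) * fF w * fL v)
      = ((α^2*ρ*EL) + ((2*α - 2*α^2)*ρ*mL)*w
          + ((α^2 - 2*α)*ρ)*w^2 + (ρ*σh^2)*(Dh w)^2) * fF w := by
    intro w
    have h : (fun v => (((α^2 - 2*α)*w^2 + σh^2*(Dh w)^2) + ((2*α - 2*α^2)*w)*v
          + α^2*v^2 + 0*(Dh v)^2) * fF w * fL v)
        = fun v => fF w * ((((α^2 - 2*α)*w^2 + σh^2*(Dh w)^2) + ((2*α - 2*α^2)*w)*v
          + α^2*v^2 + 0*(Dh v)^2) * fL v) := by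
      funext v; ring
    rw [h, integral_const_mul, lin_integral fL Dh hfLint intWL intW2L intDh2L,
      hfLmass, hWL, hW2L]
    ring
  simp only [hω1, hω2, hinner1, hinner2]
  -- outer integrals
  have houter1 :
      (∫ w in Icc (-1:ℝ) 1,
        ((2*α*(α-1)*EF + σ^2*JD) + (-(4*α*(α-1)*mF))*w
          + (2*α*(α-1))*w^2 + σ^2*(D w)^2) * fF w)
      = (2*α*(α-1)*EF + σ^2*JD) + (-(4*α*(α-1)*mF))*mF
          + (2*α*(α-1))*EF + σ^2*JD := by
    rw [lin_integral fF D hfFint intWF intW2F intD2F, hfFmass, ← hmF, ← hEF, ← hJD]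
    ring
  have houter2 :
      (∫ w in Icc (-1:ℝ) 1,
        ((α^2*ρ*EL) + ((2*α - 2*α^2)*ρ*mL)*w
          + ((α^2 - 2*α)*ρ)*w^2 + (ρ*σh^2)*(Dh w)^2) * fF w)
      = (α^2*ρ*EL) + ((2*α - 2*α^2)*ρ*mL)*mF
          + ((α^2 - 2*α)*ρ)*EF + (ρ*σh^2)*JDh := by
    rw [lin_integral fF Dh hfFint intWF intW2F intDh2F, hfFmass, ← hmF, ← hEF, ← hJDh]
    ring
  rw [houter1, houter2]
  ring
end

section
/- Let f_L be a density on I with mass ρ > 0, mean m_L = (1/ρ)∫_I w̃ f_L(w̃) dw̃ and second moment E_L = (1/ρ)∫_I w̃² f_L(w̃) dw̃, let η_L > 0, and take R ≡ 1 in the controlled leader interaction with independent zero-mean noises θ̃₁, θ̃₂ of variance σ̃² and diffusion weight D̃ : I → [0,1]. Then (η_L/(2ρ)) ∫_{I²} E[(w̃*)² + (ṽ*)² − w̃² − ṽ²] f_L(w̃) f_L(ṽ) dw̃ dṽ = ρη_L [ 2α(α−1)(E_L − m_L²) − (β/2)(2−β)(E_L + m_L²) + 2β(1−β)(ψ w_d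 + μ m_F) m_L + β²(ψ w_d + μ m_F)² ] + η_L σ̃² ∫_I D̃²(w̃) f_L(w̃) dw̃, where β = 4α²/(ν+4α²). -/
open Set MeasureTheory ProbabilityTheory

lemma noise_sq {Ω : Type*} [MeasureSpace Ω] [IsProbabilityMeasure (volume : Measure Ω)]
    (θ : Ω → ℝ) (hint : Integrable θ) (hsq : Integrable fun ω => (θ ω)^2)
    (hmean : (∫ ω, θ ω) = 0) (a d : ℝ) :
    (∫ ω, (a + θ ω * d)^2) = a^2 + (∫ ω, (θ ω)^2) * d^2 := by
  have e : (fun ω => (a + θ ω * d)^2)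
      = fun ω => a^2 + ((2*a*d) * θ ω + d^2 * (θ ω)^2) := funext fun ω => by ring
  have hg : Integrable (fun ω => (2*a*d) * θ ω + d^2 * (θ ω)^2) :=
    (hint.const_mul _).add (hsq.const_mul _)
  rw [e, integral_add (integrable_const _) hg,
    integral_add (hint.const_mul _) (hsq.const_mul _), integral_const_mul,
    integral_const_mul, integral_const, hmean]
  simp [measure_univ]
  ring

lemma noise_sq_int {Ω : Type*} [MeasureSpace Ω] [IsProbabilityMeasure (volume : Measure Ω)]
    (θ : Ω → ℝ) (hint : Integrable θ) (hsq : Integrable fun ω => (θ ω)^2) (a d : ℝ) :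
    Integrable (fun ω => (a + θ ω * d)^2) := by
  have e : (fun ω => (a + θ ω * d)^2)
      = fun ω => a^2 + ((2*a*d) * θ ω + d^2 * (θ ω)^2) := funext fun ω => by ring
  rw [e]
  exact (integrable_const _).add ((hint.const_mul _).add (hsq.const_mul _))

lemma poly_integral' (f D : ℝ → ℝ)
    (hf : IntegrableOn f (Icc (-1:ℝ) 1))
    (h1 : IntegrableOn (fun v => v * f v) (Icc (-1:ℝ) 1))
    (h2 : IntegrableOn (fun v => v^2 * f v) (Icc (-1:ℝ) 1))
    (h3 : IntegrableOn (fun v => (D v)^2 * f v) (Icc (-1:ℝ) 1))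
    (a0 a1 a2 a3 : ℝ) :
    (∫ v in Icc (-1:ℝ) 1, (a0 + a1*v + a2*v^2 + a3*(D v)^2) * f v)
      = a0 * (∫ v in Icc (-1:ℝ) 1, f v) + a1 * (∫ v in Icc (-1:ℝ) 1, v * f v)
        + a2 * (∫ v in Icc (-1:ℝ) 1, v^2 * f v)
        + a3 * (∫ v in Icc (-1:ℝ) 1, (D v)^2 * f v) := by
  have e : (fun v => (a0 + a1*v + a2*v^2 + a3*(D v)^2) * f v)
      = fun v => a0 * f v + (a1 * (v * f v) + (a2 * (v^2 * f v) + a3 * ((D v)^2 * f v))) :=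
    funext fun v => by ring
  have hg1 : IntegrableOn (fun v => a1 * (v * f v) + (a2 * (v^2 * f v) + a3 * ((D v)^2 * f v)))
      (Icc (-1:ℝ) 1) := (h1.const_mul a1).add ((h2.const_mul a2).add (h3.const_mul a3))
  have hg2 : IntegrableOn (fun v => a2 * (v^2 * f v) + a3 * ((D v)^2 * f v))
      (Icc (-1:ℝ) 1) := (h2.const_mul a2).add (h3.const_mul a3)
  rw [e, integral_add (hf.const_mul a0) hg1,
    integral_add (h1.const_mul a1) hg2,
    integral_add (h2.const_mul a2) (h3.const_mul a3),
    integral_const_mul, integral_const_mul, integral_const_mul, integral_const_mul]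
  ring

lemma double_int (f D : ℝ → ℝ)
    (hf : IntegrableOn f (Icc (-1:ℝ) 1))
    (h1 : IntegrableOn (fun v => v * f v) (Icc (-1:ℝ) 1))
    (h2 : IntegrableOn (fun v => v^2 * f v) (Icc (-1:ℝ) 1))
    (h3 : IntegrableOn (fun v => (D v)^2 * f v) (Icc (-1:ℝ) 1))
    (c2 c11 c1 c0 cd : ℝ) :
    (∫ w in Icc (-1:ℝ) 1, ∫ v in Icc (-1:ℝ) 1,
        (c2*(w^2+v^2) + c11*(w*v) + c1*(w+v) + c0 + cd*((D w)^2+(D v)^2)) * f w * f v)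
      = c0 * (∫ v in Icc (-1:ℝ) 1, f v)^2
        + 2*c1 * (∫ v in Icc (-1:ℝ) 1, f v) * (∫ v in Icc (-1:ℝ) 1, v * f v)
        + 2*c2 * (∫ v in Icc (-1:ℝ) 1, f v) * (∫ v in Icc (-1:ℝ) 1, v^2 * f v)
        + c11 * (∫ v in Icc (-1:ℝ) 1, v * f v)^2
        + 2*cd * (∫ v in Icc (-1:ℝ) 1, f v) * (∫ v in Icc (-1:ℝ) 1, (D v)^2 * f v) := by
  have hInner : ∀ w : ℝ, (∫ v in Icc (-1:ℝ) 1,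
        (c2*(w^2+v^2) + c11*(w*v) + c1*(w+v) + c0 + cd*((D w)^2+(D v)^2)) * f w * f v)
      = (f w * (c2*w^2 + c1*w + c0 + cd*(D w)^2)) * (∫ v in Icc (-1:ℝ) 1, f v)
        + (f w * (c11*w + c1)) * (∫ v in Icc (-1:ℝ) 1, v * f v)
        + (f w * c2) * (∫ v in Icc (-1:ℝ) 1, v^2 * f v)
        + (f w * cd) * (∫ v in Icc (-1:ℝ) 1, (D v)^2 * f v) := by
    intro w
    rw [show (fun v => (c2*(w^2+v^2) + c11*(w*v) + c1*(w+v) + c0 + cd*((D w)^2+(D v)^2)) * f w * f v)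
        = fun v => ((f w * (c2*w^2 + c1*w + c0 + cd*(D w)^2)) + (f w * (c11*w + c1))*v
            + (f w * c2)*v^2 + (f w * cd)*(D v)^2) * f v from funext fun v => by ring]
    exact poly_integral' f D hf h1 h2 h3 _ _ _ _
  rw [integral_congr_ae (ae_of_all _ hInner)]
  rw [show (fun w => (f w * (c2*w^2 + c1*w + c0 + cd*(D w)^2)) * (∫ v in Icc (-1:ℝ) 1, f v)
        + (f w * (c11*w + c1)) * (∫ v in Icc (-1:ℝ) 1, v * f v)
        + (f w * c2) * (∫ v in Icc (-1:ℝ) 1, v^2 * f v)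
        + (f w * cd) * (∫ v in Icc (-1:ℝ) 1, (D v)^2 * f v))
      = fun w => ((c0 * (∫ v in Icc (-1:ℝ) 1, f v) + c1 * (∫ v in Icc (-1:ℝ) 1, v * f v)
            + c2 * (∫ v in Icc (-1:ℝ) 1, v^2 * f v) + cd * (∫ v in Icc (-1:ℝ) 1, (D v)^2 * f v))
          + (c1 * (∫ v in Icc (-1:ℝ) 1, f v) + c11 * (∫ v in Icc (-1:ℝ) 1, v * f v)) * w
          + (c2 * (∫ v in Icc (-1:ℝ) 1, f v)) * w^2
          + (cd * (∫ v in Icc (-1:ℝ) 1, f v)) * (D w)^2) * f w from funext fun w => by ring]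
  rw [poly_integral' f D hf h1 h2 h3 _ _ _ _]
  ring

/-- evolution of the leaders' second moment in the Boltzmann
description of the controlled leader-leader interaction with `R ≡ 1` and
diffusion. -/
theorem leaders_second_moment_evolution
    (fL : ℝ → ℝ) (hfLmeas : Measurable fL)
    (hfL0 : ∀ w ∈ Icc (-1:ℝ) 1, 0 ≤ fL w)
    (hfLint : IntegrableOn fL (Icc (-1:ℝ) 1))
    (ρ : ℝ) (hρ : 0 < ρ)
    (hfLmass : (∫ w in Icc (-1:ℝ) 1, fL w) = ρ)
    (mL EL : ℝ)
    (hmL : mL = (1/ρ) * ∫ w in Icc (-1:ℝ) 1, w * fL w)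
    (hEL : EL = (1/ρ) * ∫ w in Icc (-1:ℝ) 1, w^2 * fL w)
    (α ν β ψ μ wd mF ηL σt : ℝ)
    (hα : 0 < α) (hν : 0 < ν) (hβ : β = 4*α^2/(ν + 4*α^2))
    (hψ : 0 ≤ ψ) (hμ : 0 ≤ μ) (hψμ : ψ + μ = 1) (hηL : 0 < ηL)
    (Dt : ℝ → ℝ) (hDtmeas : Measurable Dt)
    (hDt : ∀ w ∈ Icc (-1:ℝ) 1, Dt w ∈ Icc (0:ℝ) 1)
    (Ω : Type*) [MeasureSpace Ω] [IsProbabilityMeasure (volume : Measure Ω)]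
    (θ₁ θ₂ : Ω → ℝ)
    (hθ₁meas : Measurable θ₁) (hθ₂meas : Measurable θ₂)
    (hindep : IndepFun θ₁ θ₂)
    (hθ₁int : Integrable θ₁) (hθ₂int : Integrable θ₂)
    (hθ₁sq : Integrable fun ω => (θ₁ ω)^2)
    (hθ₂sq : Integrable fun ω => (θ₂ ω)^2)
    (hθ₁mean : (∫ ω, θ₁ ω) = 0) (hθ₂mean : (∫ ω, θ₂ ω) = 0)
    (hθ₁var : (∫ ω, (θ₁ ω)^2) = σt^2) (hθ₂var : (∫ ω, (θ₂ ω)^2) = σt^2) :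
    (ηL/(2*ρ)) * (∫ w in Icc (-1:ℝ) 1, ∫ v in Icc (-1:ℝ) 1,
        (∫ ω, ((w + α*(v - w) + (-(β/2) * (ψ*(w + v - 2*wd) + μ*(w + v - 2*mF)))
                  + θ₁ ω * Dt w)^2
               + (v + α*(w - v) + (-(β/2) * (ψ*(w + v - 2*wd) + μ*(w + v - 2*mF)))
                  + θ₂ ω * Dt v)^2
               - w^2 - v^2))
          * fL w * fL v)
    = ρ*ηL*(2*α*(α - 1)*(EL - mL^2)
            - (β/2)*(2 - β)*(EL + mL^2)
            + 2*β*(1 - β)*(ψ*wd + μ*mF)*mL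
            + β^2*(ψ*wd + μ*mF)^2)
      + ηL*σt^2*(∫ w in Icc (-1:ℝ) 1, (Dt w)^2 * fL w) := by
  -- integrability of the moment integrands
  have I1 : IntegrableOn (fun v => v * fL v) (Icc (-1:ℝ) 1) := by
    refine Integrable.mono' hfLint.abs ((measurable_id.mul hfLmeas).aestronglyMeasurable) ?_
    filter_upwards [ae_restrict_mem measurableSet_Icc] with v hv
    have h1 : |v| ≤ 1 := abs_le.mpr ⟨hv.1, hv.2⟩
    rw [Real.norm_eq_abs, abs_mul]
    nlinarith [abs_nonneg (fL v), abs_nonneg v]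
  have I2 : IntegrableOn (fun v => v^2 * fL v) (Icc (-1:ℝ) 1) := by
    refine Integrable.mono' hfLint.abs (((measurable_id.pow_const 2).mul hfLmeas).aestronglyMeasurable) ?_
    filter_upwards [ae_restrict_mem measurableSet_Icc] with v hv
    have h1 : v^2 ≤ 1 := by nlinarith [hv.1, hv.2]
    rw [Real.norm_eq_abs, abs_mul, abs_pow, sq_abs]
    nlinarith [abs_nonneg (fL v), sq_nonneg v]
  have I3 : IntegrableOn (fun v => (Dt v)^2 * fL v) (Icc (-1:ℝ) 1) := by
    refine Integrable.mono' hfLint.abs (((hDtmeas.pow_const 2).mul hfLmeas).aestronglyMeasurable) ?_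
    filter_upwards [ae_restrict_mem measurableSet_Icc] with v hv
    have h1 : (Dt v)^2 ≤ 1 := by nlinarith [(hDt v hv).1, (hDt v hv).2]
    rw [Real.norm_eq_abs, abs_mul, abs_pow, sq_abs]
    nlinarith [abs_nonneg (fL v), sq_nonneg (Dt v)]
  -- the inner expectation over the noise
  have hω : ∀ w v : ℝ, (∫ ω, ((w + α*(v - w) + (-(β/2) * (ψ*(w + v - 2*wd) + μ*(w + v - 2*mF)))
                  + θ₁ ω * Dt w)^2
               + (v + α*(w - v) + (-(β/2) * (ψ*(w + v - 2*wd) + μ*(w + v - 2*mF)))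
                  + θ₂ ω * Dt v)^2
               - w^2 - v^2))
      = (w + α*(v - w) + (-(β/2) * (ψ*(w + v - 2*wd) + μ*(w + v - 2*mF))))^2
        + (v + α*(w - v) + (-(β/2) * (ψ*(w + v - 2*wd) + μ*(w + v - 2*mF))))^2
        - w^2 - v^2 + σt^2*(Dt w)^2 + σt^2*(Dt v)^2 := by
    intro w v
    set a := w + α*(v - w) + (-(β/2) * (ψ*(w + v - 2*wd) + μ*(w + v - 2*mF))) with ha
    set b := v + α*(w - v) + (-(β/2) * (ψ*(w + v - 2*wd) + μ*(w + v - 2*mF))) with hb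
    have e : (fun ω => ((a + θ₁ ω * Dt w)^2 + (b + θ₂ ω * Dt v)^2 - w^2 - v^2))
        = fun ω => (a + θ₁ ω * Dt w)^2 + ((b + θ₂ ω * Dt v)^2 + (- w^2 - v^2)) :=
      funext fun ω => by ring
    have hg : Integrable (fun ω => (b + θ₂ ω * Dt v)^2 + (- w^2 - v^2)) :=
      (noise_sq_int θ₂ hθ₂int hθ₂sq b (Dt v)).add (integrable_const _)
    rw [e, integral_add (noise_sq_int θ₁ hθ₁int hθ₁sq a (Dt w)) hg,
      integral_add (noise_sq_int θ₂ hθ₂int hθ₂sq b (Dt v)) (integrable_const _),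
      noise_sq θ₁ hθ₁int hθ₁sq hθ₁mean a (Dt w),
      noise_sq θ₂ hθ₂int hθ₂sq hθ₂mean b (Dt v), hθ₁var, hθ₂var, integral_const]
    simp [measure_univ]
    ring
  -- reduce to the factorized double integral
  have hdouble : (∫ w in Icc (-1:ℝ) 1, ∫ v in Icc (-1:ℝ) 1,
        (∫ ω, ((w + α*(v - w) + (-(β/2) * (ψ*(w + v - 2*wd) + μ*(w + v - 2*mF)))
                  + θ₁ ω * Dt w)^2
               + (v + α*(w - v) + (-(β/2) * (ψ*(w + v - 2*wd) + μ*(w + v - 2*mF)))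
                  + θ₂ ω * Dt v)^2
               - w^2 - v^2))
          * fL w * fL v)
      = (2*(β*(ψ*wd+μ*mF))^2) * (∫ v in Icc (-1:ℝ) 1, fL v)^2
        + 2*(2*(β*(ψ*wd+μ*mF))*(1-β*(ψ+μ))) * (∫ v in Icc (-1:ℝ) 1, fL v)
            * (∫ v in Icc (-1:ℝ) 1, v * fL v)
        + 2*((1-α-β/2*(ψ+μ))^2 + (α-β/2*(ψ+μ))^2 - 1) * (∫ v in Icc (-1:ℝ) 1, fL v)
            * (∫ v in Icc (-1:ℝ) 1, v^2 * fL v)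
        + (4*(1-α-β/2*(ψ+μ))*(α-β/2*(ψ+μ))) * (∫ v in Icc (-1:ℝ) 1, v * fL v)^2
        + 2*σt^2 * (∫ v in Icc (-1:ℝ) 1, fL v) * (∫ v in Icc (-1:ℝ) 1, (Dt v)^2 * fL v) := by
    have h1 : (∫ w in Icc (-1:ℝ) 1, ∫ v in Icc (-1:ℝ) 1,
        (∫ ω, ((w + α*(v - w) + (-(β/2) * (ψ*(w + v - 2*wd) + μ*(w + v - 2*mF)))
                  + θ₁ ω * Dt w)^2
               + (v + α*(w - v) + (-(β/2) * (ψ*(w + v - 2*wd) + μ*(w + v - 2*mF)))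
                  + θ₂ ω * Dt v)^2
               - w^2 - v^2))
          * fL w * fL v)
        = ∫ w in Icc (-1:ℝ) 1, ∫ v in Icc (-1:ℝ) 1,
            (((1-α-β/2*(ψ+μ))^2 + (α-β/2*(ψ+μ))^2 - 1)*(w^2+v^2)
              + (4*(1-α-β/2*(ψ+μ))*(α-β/2*(ψ+μ)))*(w*v)
              + (2*(β*(ψ*wd+μ*mF))*(1-β*(ψ+μ)))*(w+v)
              + (2*(β*(ψ*wd+μ*mF))^2)
              + σt^2*((Dt w)^2+(Dt v)^2)) * fL w * fL v :=
      integral_congr_ae (ae_of_all _ fun w => integral_congr_ae (ae_of_all _ fun v => by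
        beta_reduce; rw [hω w v]; ring))
    rw [h1]
    exact double_int fL Dt hfLint I1 I2 I3 _ _ _ _ _
  rw [hdouble, hfLmass]
  have hJ1 : (∫ w in Icc (-1:ℝ) 1, w * fL w) = ρ * mL := by
    rw [hmL]; field_simp
  have hJ2 : (∫ w in Icc (-1:ℝ) 1, w^2 * fL w) = ρ * EL := by
    rw [hEL]; field_simp
  rw [hJ1, hJ2]
  have hμ' : μ = 1 - ψ := by linarith
  subst hμ'
  field_simp
  ring
end

section
/- Let η_F, η̃_{FL}, η̃_L > 0, 0 < α < 1, 0 < β < 2, 0 < ψ ≤ 1, μ = 1−ψ and w_d ∈ ℝ. Let (m_L, m_F) solve d m_L/dt = η̃_L β[ψ(w_d − m_L) + μ(m_F − m_L)], d m_F/dt = η̃_{FL} α (m_L − m_F), and let (E_F, E_L) solve the diffusion-free second moment equations d E_F/dt = 2η_F α(α−1)(E_F − m_F²) + η̃_{FL} α²(E_L + E_F − 2 m_L m_F) + 2α η̃_{FL}(m_F m_L − E_F), d E_L/dt = η̃_L [ 2α(α−1)(E_L − m_L²) − (β/2)(2−β)(E_L + m_L²) + 2β(1−β)(ψ w_d + μ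 m_F) m_L + β²(ψ w_d + μ m_F)² ]. Then E_F(t) → w_d² and E_L(t) → w_d² as t → ∞; consequently E_F(t) + w_d² − 2 m_F(t) w_d → 0 and E_L(t) + w_d² − 2 m_L(t) w_d → 0, i.e. the second moments of the deviation from the desired opinion vanish in the large-time limit. -/
open Set Filter


/-- one-sided exponential comparison -/
private lemma aux_expBound {c R T : ℝ} (hc : 0 < c) {y d : ℝ → ℝ}
    (hy : ∀ t ∈ Ici T, HasDerivWithinAt y (d t) (Ici T) t)
    (hd : ∀ t ∈ Ici T, d t ≤ c * (R - y t)) :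
    ∀ t ∈ Ici T, y t ≤ R + (y T - R) * Real.exp (-(c * (t - T))) := by
  have hZd : ∀ t ∈ Ici T, HasDerivWithinAt (fun s => Real.exp (c*s) * (y s - R))
      (Real.exp (c*t) * c * (y t - R) + Real.exp (c*t) * d t) (Ici T) t := by
    intro t ht
    have h1 : HasDerivWithinAt (fun s : ℝ => Real.exp (c*s)) (Real.exp (c*t) * c) (Ici T) t := by
      have := ((hasDerivAt_id t).const_mul c).exp
      simpa [mul_comm] using this.hasDerivWithinAt
    have h2 : HasDerivWithinAt (fun s => y s - R) (d t) (Ici T) t := (hy t ht).sub_const _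
    exact h1.mul h2
  have hanti : AntitoneOn (fun s => Real.exp (c*s) * (y s - R)) (Ici T) := by
    apply antitoneOn_of_deriv_nonpos (convex_Ici T)
    · exact fun t ht => (hZd t ht).continuousWithinAt
    · intro t ht
      rw [interior_Ici] at ht
      exact ((hZd t (le_of_lt (mem_Ioi.1 ht))).hasDerivAt (Ici_mem_nhds ht)).differentiableAt.differentiableWithinAt
    · intro t ht
      rw [interior_Ici] at ht
      rw [((hZd t (le_of_lt (mem_Ioi.1 ht))).hasDerivAt (Ici_mem_nhds ht)).deriv]
      have h := hd t (le_of_lt (mem_Ioi.1 ht))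
      nlinarith [Real.exp_pos (c*t)]
  intro t ht
  have h := hanti self_mem_Ici ht ht
  simp only at h
  have hexp : Real.exp (c*t) * Real.exp (-(c*(t-T))) = Real.exp (c*T) := by
    rw [← Real.exp_add]; ring_nf
  have h2 : Real.exp (c*t) * (y t - R) ≤ Real.exp (c*t) * ((y T - R) * Real.exp (-(c*(t-T)))) := by
    calc Real.exp (c*t) * (y t - R) ≤ Real.exp (c*T) * (y T - R) := h
    _ = Real.exp (c*t) * ((y T - R) * Real.exp (-(c*(t-T)))) := by rw [← hexp]; ring
  have := (mul_le_mul_iff_right₀ (Real.exp_pos (c*t))).1 h2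
  linarith

private lemma aux_exp_decay (A c T : ℝ) (hc : 0 < c) :
    Tendsto (fun t => A * Real.exp (-(c*(t-T)))) atTop (nhds 0) := by
  have h1 : Tendsto (fun t : ℝ => -(c*(t-T))) atTop atBot := by
    have : Tendsto (fun t : ℝ => t - T) atTop atTop := tendsto_atTop_add_const_right _ _ tendsto_id
    have h2 := this.const_mul_atTop hc
    exact tendsto_neg_atBot_iff.2 h2
  have h3 : Tendsto (fun t : ℝ => Real.exp (-(c*(t-T)))) atTop (nhds 0) :=
    Real.tendsto_exp_atBot.comp h1
  simpa using h3.const_mul A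

private lemma aux_forcing {c L : ℝ} (hc : 0 < c) {x g : ℝ → ℝ}
    (hx : ∀ t ∈ Ici (0:ℝ), HasDerivWithinAt x (g t - c * x t) (Ici 0) t)
    (hg : Tendsto g atTop (nhds (c * L))) :
    Tendsto x atTop (nhds L) := by
  rw [Metric.tendsto_atTop]
  intro ε hε
  obtain ⟨T₀, hT₀⟩ := eventually_atTop.1
    (hg.eventually (Metric.ball_mem_nhds (c*L) (by positivity : (0:ℝ) < c*ε/2)))
  set T := max T₀ 0 with hTdef
  have hT0 : (0:ℝ) ≤ T := le_max_right _ _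
  have hgb : ∀ t ∈ Ici T, |g t - c*L| ≤ c*ε/2 := by
    intro t ht
    have := hT₀ t (le_trans (le_max_left _ _) ht)
    rw [Real.dist_eq] at this
    linarith
  have hxT : ∀ t ∈ Ici T, HasDerivWithinAt x (g t - c * x t) (Ici T) t :=
    fun t ht => (hx t (le_trans hT0 ht)).mono (Ici_subset_Ici.2 hT0)
  -- upper bound
  have hup := aux_expBound (R := L + ε/2) hc hxT (by
    intro t ht
    have := hgb t ht
    have h1 : g t - c*L ≤ c*ε/2 := (abs_le.1 this).2
    nlinarith)
  -- lower bound
  have hlo := aux_expBound (R := -(L - ε/2)) hc (y := fun t => -x t)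
    (d := fun t => -(g t - c * x t))
    (fun t ht => (hxT t ht).neg) (by
    intro t ht
    have := hgb t ht
    have h1 : -(c*ε/2) ≤ g t - c*L := (abs_le.1 this).1
    nlinarith)
  set A := |x T - L| + ε/2 with hA
  have hbound : ∀ t ∈ Ici T, |x t - L| ≤ ε/2 + A * Real.exp (-(c*(t-T))) := by
    intro t ht
    have h1 := hup t ht
    have h2 := hlo t ht
    have hE := Real.exp_pos (-(c*(t-T)))
    have habs := abs_nonneg (x T - L)
    have hub : x T - L ≤ |x T - L| := le_abs_self _
    have hlb : -(|x T - L|) ≤ x T - L := neg_abs_le _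
    rw [abs_le]
    constructor
    · nlinarith
    · nlinarith
  have hdec := aux_exp_decay A c T hc
  have hev : ∀ᶠ t in atTop, A * Real.exp (-(c*(t-T))) < ε/2 :=
    hdec.eventually_lt_const (by linarith)
  obtain ⟨N₀, hN₀⟩ := eventually_atTop.1 hev
  refine ⟨max N₀ T, fun t ht => ?_⟩
  have ht1 : N₀ ≤ t := le_trans (le_max_left _ _) ht
  have ht2 : T ≤ t := le_trans (le_max_right _ _) ht
  rw [Real.dist_eq]
  have := hbound t ht2
  have := hN₀ t ht1
  calc |x t - L| ≤ ε/2 + A * Real.exp (-(c*(t-T))) := hbound t ht2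
  _ < ε/2 + ε/2 := by linarith [hN₀ t ht1]
  _ = ε := by ring

/-- for the diffusion-free closed system of the first two
moments, the second moments of followers and leaders converge to `w_d²` and
the mean-square deviations from the desired opinion vanish in the large-time
limit. -/
theorem second_moments_converge_to_desired
    (ηF ηFL ηL α β ψ μ wd : ℝ)
    (hηF : 0 < ηF) (hηFL : 0 < ηFL) (hηL : 0 < ηL)
    (hα0 : 0 < α) (hα1 : α < 1) (hβ0 : 0 < β) (hβ2 : β < 2)
    (hψ0 : 0 < ψ) (hψ1 : ψ ≤ 1) (hμ : μ = 1 - ψ)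
    (mL mF EF EL : ℝ → ℝ)
    (hmL : ∀ t ∈ Ici (0:ℝ),
        HasDerivWithinAt mL (ηL*β*(ψ*(wd - mL t) + μ*(mF t - mL t))) (Ici 0) t)
    (hmF : ∀ t ∈ Ici (0:ℝ),
        HasDerivWithinAt mF (ηFL*α*(mL t - mF t)) (Ici 0) t)
    (hEF : ∀ t ∈ Ici (0:ℝ),
        HasDerivWithinAt EF
          (2*ηF*α*(α - 1)*(EF t - (mF t)^2)
            + ηFL*α^2*(EL t + EF t - 2*(mL t)*(mF t))
            + 2*α*ηFL*((mF t)*(mL t) - EF t)) (Ici 0) t)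
    (hEL : ∀ t ∈ Ici (0:ℝ),
        HasDerivWithinAt EL
          (ηL*(2*α*(α - 1)*(EL t - (mL t)^2)
            - (β/2)*(2 - β)*(EL t + (mL t)^2)
            + 2*β*(1 - β)*(ψ*wd + μ*(mF t))*(mL t)
            + β^2*(ψ*wd + μ*(mF t))^2)) (Ici 0) t) :
    Tendsto EF atTop (nhds (wd^2))
    ∧ Tendsto EL atTop (nhds (wd^2))
    ∧ Tendsto (fun t => EF t + wd^2 - 2*(mF t)*wd) atTop (nhds 0)
    ∧ Tendsto (fun t => EL t + wd^2 - 2*(mL t)*wd) atTop (nhds 0) := by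
  subst hμ
  set a : ℝ := ηL*β with ha_def
  set b : ℝ := ηFL*α with hb_def
  have ha : 0 < a := by positivity
  have hb : 0 < b := by positivity
  set u : ℝ → ℝ := fun t => mL t - wd with hu_def
  set v : ℝ → ℝ := fun t => mF t - wd with hv_def
  have hu : ∀ t ∈ Ici (0:ℝ), HasDerivWithinAt u (a*((1-ψ)*v t - u t)) (Ici 0) t := by
    intro t ht
    have e : ηL*β*(ψ*(wd - mL t) + (1-ψ)*(mF t - mL t)) = a*((1-ψ)*v t - u t) := by
      simp only [hu_def, hv_def, ha_def]; ring
    exact e ▸ (hmL t ht).sub_const wd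
  have hv : ∀ t ∈ Ici (0:ℝ), HasDerivWithinAt v (b*(u t - v t)) (Ici 0) t := by
    intro t ht
    have e : ηFL*α*(mL t - mF t) = b*(u t - v t) := by
      simp only [hu_def, hv_def, hb_def]; ring
    exact e ▸ (hmF t ht).sub_const wd
  set W : ℝ → ℝ := fun t => b*(u t*u t) + a*(v t*v t) with hW_def
  have hW : ∀ t ∈ Ici (0:ℝ), HasDerivWithinAt W
      (b*((a*((1-ψ)*v t - u t))*u t + u t*(a*((1-ψ)*v t - u t)))
        + a*((b*(u t - v t))*v t + v t*(b*(u t - v t)))) (Ici 0) t := by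
    intro t ht
    exact (((hu t ht).mul (hu t ht)).const_mul b).add (((hv t ht).mul (hv t ht)).const_mul a)
  set κ : ℝ := a*b*ψ/(a+b) with hκ_def
  have hκ : 0 < κ := by positivity
  have hκab : κ * (a+b) = a*b*ψ := by
    rw [hκ_def]; field_simp
  have hDle : ∀ t ∈ Ici (0:ℝ),
      (b*((a*((1-ψ)*v t - u t))*u t + u t*(a*((1-ψ)*v t - u t)))
        + a*((b*(u t - v t))*v t + v t*(b*(u t - v t)))) ≤ κ * ((0:ℝ) - W t) := by
    intro t _
    have h1 : 0 ≤ a*b*(2-ψ)*(u t - v t)^2 := by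
      apply mul_nonneg
      · apply mul_nonneg (by positivity); linarith
      · positivity
    have h2 : 0 ≤ κ*a*(u t)^2 := by positivity
    have h3 : 0 ≤ κ*b*(v t)^2 := by positivity
    have hk3 : κ*(a+b)*((u t)^2+(v t)^2) = a*b*ψ*((u t)^2+(v t)^2) := by rw [hκab]
    simp only [hW_def]
    nlinarith [h1, h2, h3, hk3]
  have hWle := aux_expBound (R := (0:ℝ)) (T := (0:ℝ)) hκ hW hDle
  have hWnonneg : ∀ t, 0 ≤ W t := by
    intro t; simp only [hW_def]; nlinarith [sq_nonneg (u t), sq_nonneg (v t)]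
  have hWlim : Tendsto W atTop (nhds 0) := by
    refine tendsto_of_tendsto_of_tendsto_of_le_of_le'
      (g := fun _ => (0:ℝ)) (h := fun t => 0 + (W 0 - 0) * Real.exp (-(κ*(t-0))))
      tendsto_const_nhds ?_ ?_ ?_
    · have := aux_exp_decay (W 0 - 0) κ 0 hκ
      simpa using this
    · exact Eventually.of_forall hWnonneg
    · filter_upwards [eventually_ge_atTop (0:ℝ)] with t ht
      exact hWle t ht
  have hsqrt : Tendsto (fun t => Real.sqrt (W t / b)) atTop (nhds 0) := by
    have h := (Real.continuous_sqrt.tendsto (0/b)).comp (hWlim.div_const b)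
    simpa [Function.comp_def] using h
  have husq : ∀ t, |u t| ≤ Real.sqrt (W t / b) := by
    intro t
    have h1 : (u t)^2 ≤ W t / b := by
      rw [le_div_iff₀ hb]
      simp only [hW_def]
      nlinarith [sq_nonneg (v t)]
    calc |u t| = Real.sqrt ((u t)^2) := (Real.sqrt_sq_eq_abs _).symm
    _ ≤ _ := Real.sqrt_le_sqrt h1
  have hsqrta : Tendsto (fun t => Real.sqrt (W t / a)) atTop (nhds 0) := by
    have h := (Real.continuous_sqrt.tendsto (0/a)).comp (hWlim.div_const a)
    simpa [Function.comp_def] using h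
  have hvsq : ∀ t, |v t| ≤ Real.sqrt (W t / a) := by
    intro t
    have h1 : (v t)^2 ≤ W t / a := by
      rw [le_div_iff₀ ha]
      simp only [hW_def]
      nlinarith [sq_nonneg (u t)]
    calc |v t| = Real.sqrt ((v t)^2) := (Real.sqrt_sq_eq_abs _).symm
    _ ≤ _ := Real.sqrt_le_sqrt h1
  have hulim : Tendsto u atTop (nhds 0) := by
    apply tendsto_of_tendsto_of_tendsto_of_le_of_le'
      (f := u) (g := fun t => -Real.sqrt (W t / b)) (h := fun t => Real.sqrt (W t / b))
    · simpa using hsqrt.neg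
    · exact hsqrt
    · exact Eventually.of_forall fun t => neg_le_of_abs_le (husq t)
    · exact Eventually.of_forall fun t => le_of_abs_le (husq t)
  have hvlim : Tendsto v atTop (nhds 0) := by
    apply tendsto_of_tendsto_of_tendsto_of_le_of_le'
      (f := v) (g := fun t => -Real.sqrt (W t / a)) (h := fun t => Real.sqrt (W t / a))
    · simpa using hsqrta.neg
    · exact hsqrta
    · exact Eventually.of_forall fun t => neg_le_of_abs_le (hvsq t)
    · exact Eventually.of_forall fun t => le_of_abs_le (hvsq t)
  have hmLlim : Tendsto mL atTop (nhds wd) := by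
    have h := hulim.add_const wd
    have e : (fun t => u t + wd) = mL := by funext t; simp [hu_def]
    rw [e] at h; simpa using h
  have hmFlim : Tendsto mF atTop (nhds wd) := by
    have h := hvlim.add_const wd
    have e : (fun t => v t + wd) = mF := by funext t; simp [hv_def]
    rw [e] at h; simpa using h
  -- EL convergence
  have hcL : 0 < ηL*((β/2)*(2-β) - 2*α*(α-1)) := by
    have h1 : 0 < β*(2-β) := mul_pos hβ0 (by linarith)
    have h2 : 0 < α*(1-α) := mul_pos hα0 (by linarith)
    nlinarith [mul_pos hηL h1, mul_pos hηL h2]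
  have hELlim : Tendsto EL atTop (nhds (wd^2)) := by
    apply aux_forcing hcL
      (g := fun t => ηL*(2*α*(α-1)*(-(mL t)^2) - (β/2)*(2-β)*((mL t)^2)
        + 2*β*(1-β)*(ψ*wd + (1-ψ)*(mF t))*(mL t) + β^2*(ψ*wd + (1-ψ)*(mF t))^2))
    · intro t ht
      have h := hEL t ht
      have e : ηL*(2*α*(α - 1)*(EL t - (mL t)^2)
            - (β/2)*(2 - β)*(EL t + (mL t)^2)
            + 2*β*(1 - β)*(ψ*wd + (1-ψ)*(mF t))*(mL t)
            + β^2*(ψ*wd + (1-ψ)*(mF t))^2)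
          = (ηL*(2*α*(α-1)*(-(mL t)^2) - (β/2)*(2-β)*((mL t)^2)
        + 2*β*(1-β)*(ψ*wd + (1-ψ)*(mF t))*(mL t) + β^2*(ψ*wd + (1-ψ)*(mF t))^2))
          - (ηL*((β/2)*(2-β) - 2*α*(α-1))) * EL t := by ring
      exact e ▸ h
    · have hp : Tendsto (fun t => (mL t, mF t)) atTop (nhds (wd, wd)) :=
        hmLlim.prodMk_nhds hmFlim
      have hc1 : ContinuousAt (fun p : ℝ × ℝ => ηL*(2*α*(α-1)*(-(p.1)^2) - (β/2)*(2-β)*((p.1)^2)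
        + 2*β*(1-β)*(ψ*wd + (1-ψ)*p.2)*(p.1) + β^2*(ψ*wd + (1-ψ)*p.2)^2)) (wd, wd) := by
        fun_prop
      have h := hc1.tendsto.comp hp
      have hval : ηL*(2*α*(α-1)*(-(wd)^2) - (β/2)*(2-β)*((wd)^2)
        + 2*β*(1-β)*(ψ*wd + (1-ψ)*wd)*(wd) + β^2*(ψ*wd + (1-ψ)*wd)^2)
          = (ηL*((β/2)*(2-β) - 2*α*(α-1))) * wd^2 := by ring
      rw [hval] at h
      exact h
  -- EF convergence
  have hcF : 0 < 2*ηF*α*(1-α) + ηFL*α*(2-α) := by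
    have h1 : 0 < ηF*(α*(1-α)) := mul_pos hηF (mul_pos hα0 (by linarith))
    have h2 : 0 < ηFL*(α*(2-α)) := mul_pos hηFL (mul_pos hα0 (by linarith))
    nlinarith
  have hEFlim : Tendsto EF atTop (nhds (wd^2)) := by
    apply aux_forcing hcF
      (g := fun t => 2*ηF*α*(α-1)*(-(mF t)^2) + ηFL*α^2*(EL t - 2*(mL t)*(mF t))
        + 2*α*ηFL*((mF t)*(mL t)))
    · intro t ht
      have h := hEF t ht
      have e : 2*ηF*α*(α - 1)*(EF t - (mF t)^2)
            + ηFL*α^2*(EL t + EF t - 2*(mL t)*(mF t))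
            + 2*α*ηFL*((mF t)*(mL t) - EF t)
          = (2*ηF*α*(α-1)*(-(mF t)^2) + ηFL*α^2*(EL t - 2*(mL t)*(mF t))
        + 2*α*ηFL*((mF t)*(mL t))) - (2*ηF*α*(1-α) + ηFL*α*(2-α)) * EF t := by ring
      exact e ▸ h
    · have hp : Tendsto (fun t => (mL t, mF t, EL t)) atTop (nhds (wd, wd, wd^2)) :=
        hmLlim.prodMk_nhds (hmFlim.prodMk_nhds hELlim)
      have hc1 : ContinuousAt (fun p : ℝ × ℝ × ℝ =>
          2*ηF*α*(α-1)*(-(p.2.1)^2) + ηFL*α^2*(p.2.2 - 2*p.1*p.2.1)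
            + 2*α*ηFL*(p.2.1*p.1)) (wd, wd, wd^2) := by fun_prop
      have h := hc1.tendsto.comp hp
      have hval : 2*ηF*α*(α-1)*(-(wd)^2) + ηFL*α^2*(wd^2 - 2*wd*wd) + 2*α*ηFL*(wd*wd)
          = (2*ηF*α*(1-α) + ηFL*α*(2-α)) * wd^2 := by ring
      rw [hval] at h
      exact h
  refine ⟨hEFlim, hELlim, ?_, ?_⟩
  · have h := (hEFlim.add_const (wd^2)).sub ((hmFlim.const_mul 2).mul_const wd)
    convert h using 2
    ring
  · have h := (hELlim.add_const (wd^2)).sub ((hmLlim.const_mul 2).mul_const wd)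
    convert h using 2
    ring
end
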